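/- arXiv:1501.06394 — 6 statements merged into one kernel-verified Lean document; each statement's English description precedes it below -/
import Mathlib

section
/- Every finite soluble group G satisfies l(G) = Ω(|G|), where Ω(m) denotes the number of prime divisors of m counted with multiplicity. -/
/-- The length of a finite group `G`: the largest `k` such that there is a strictly
increasing chain of subgroups `G₀ < G₁ < ⋯ < G_k` of `G`. -/
noncomputable def groupLength (G : Type*) [Group G] : ℕ :=
  sSup {k : ℕ | ∃ c : Fin (k + 1) → Subgroup G, StrictMono c}

/- Auxiliary arithmetic lemmas about Ω = length of primeFactorsList. -/

private lemma omega_le_of_dvd {a b : ℕ} (hb : b ≠ 0) (h : a ∣ b) :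
    a.primeFactorsList.length ≤ b.primeFactorsList.length := by
  obtain ⟨c, rfl⟩ := h
  have ha : a ≠ 0 := by rintro rfl; simp at hb
  have hc : c ≠ 0 := by rintro rfl; simp at hb
  have := (Nat.perm_primeFactorsList_mul ha hc).length_eq
  rw [this, List.length_append]
  omega

private lemma omega_lt_of_dvd {a b : ℕ} (hb : b ≠ 0) (h : a ∣ b) (hab : a < b) :
    a.primeFactorsList.length < b.primeFactorsList.length := by
  obtain ⟨c, rfl⟩ := h
  have ha : a ≠ 0 := by rintro rfl; simp at hb
  have hc : c ≠ 0 := by rintro rfl; simp at hb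
  have hc1 : c ≠ 1 := by rintro rfl; simp at hab
  have hlen : c.primeFactorsList ≠ [] := by
    rw [Ne, Nat.primeFactorsList_eq_nil]
    push_neg; exact ⟨hc, hc1⟩
  have hpos : 0 < c.primeFactorsList.length := List.length_pos_iff.mpr hlen
  have := (Nat.perm_primeFactorsList_mul ha hc).length_eq
  rw [this, List.length_append]
  omega

private lemma subgroup_card_lt {G : Type*} [Group G] [Finite G] {A B : Subgroup G}
    (h : A < B) : Nat.card A < Nat.card B := by
  by_contra hcon
  push_neg at hcon
  exact h.ne (Subgroup.eq_of_le_of_card_ge h.le hcon)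

/- Upper bound: any strict chain has length at most Ω(|G|). -/
private lemma chain_le_omega {G : Type*} [Group G] [Fintype G] {k : ℕ}
    (c : Fin (k + 1) → Subgroup G) (hc : StrictMono c) :
    k ≤ (Fintype.card G).primeFactorsList.length := by
  have key : ∀ i : Fin (k + 1), (i : ℕ) ≤ (Nat.card (c i)).primeFactorsList.length := by
    intro i
    induction i using Fin.induction with
    | zero => simp
    | succ i ih =>
      have hlt : c i.castSucc < c i.succ := hc (Fin.castSucc_lt_succ (i := i))
      have hdvd : Nat.card (c i.castSucc) ∣ Nat.card (c i.succ) :=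
        Subgroup.card_dvd_of_le hlt.le
      have hne : (Nat.card (c i.succ) : ℕ) ≠ 0 := Nat.card_pos.ne'
      have := omega_lt_of_dvd hne hdvd (subgroup_card_lt hlt)
      have hci : (i.castSucc : ℕ) = (i : ℕ) := rfl
      have hsi : (i.succ : ℕ) = (i : ℕ) + 1 := rfl
      omega
  have h1 := key (Fin.last k)
  have h2 : Nat.card (c (Fin.last k)) ∣ Fintype.card G := by
    rw [← Nat.card_eq_fintype_card]
    exact Subgroup.card_subgroup_dvd_card _
  have h3 := omega_le_of_dvd (Fintype.card_ne_zero (α := G)) h2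
  simp only [Fin.val_last] at h1
  omega

/- A coatom in the subgroup lattice of a finite commutative group has prime index. -/
private lemma coatom_index_prime {A : Type*} [CommGroup A] [Finite A] {M : Subgroup A}
    (hM : IsCoatom M) : M.index.Prime := by
  have hnormal : M.Normal := Subgroup.normal_of_comm M
  have hnt : Nontrivial (A ⧸ M) := by
    obtain ⟨x, hx⟩ : ∃ x, x ∉ M := by
      by_contra h
      push_neg at h
      exact hM.1 (Subgroup.eq_top_iff' M |>.mpr h)
    exact ⟨⟨(x : A ⧸ M), 1, fun h => hx ((QuotientGroup.eq_one_iff x).mp h)⟩⟩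
  have hsimple : IsSimpleGroup (A ⧸ M) := by
    refine ⟨fun N _ => ?_⟩
    have hle : M ≤ N.comap (QuotientGroup.mk' M) := by
      intro x hx
      have h1 : (QuotientGroup.mk' M) x = 1 := (QuotientGroup.eq_one_iff x).mpr hx
      simp only [Subgroup.mem_comap, h1]
      exact N.one_mem
    rcases lt_or_eq_of_le hle with hlt | heq
    · right
      have hsurj := QuotientGroup.mk'_surjective M
      have hself : N = Subgroup.map (QuotientGroup.mk' M) (N.comap (QuotientGroup.mk' M)) :=
        (Subgroup.map_comap_eq_self_of_surjective hsurj N).symm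
      rw [hself, hM.2 _ hlt]
      exact Subgroup.map_top_of_surjective _ hsurj
    · left
      have hsurj := QuotientGroup.mk'_surjective M
      have hself : N = Subgroup.map (QuotientGroup.mk' M) (N.comap (QuotientGroup.mk' M)) :=
        (Subgroup.map_comap_eq_self_of_surjective hsurj N).symm
      rw [hself, ← heq]
      ext x
      simp only [Subgroup.mem_map, Subgroup.mem_bot]
      constructor
      · rintro ⟨y, hy, rfl⟩
        exact (QuotientGroup.eq_one_iff y).mpr hy
      · intro hx
        exact ⟨1, M.one_mem, by simpa using hx.symm⟩
  have hcard : M.index = Nat.card (A ⧸ M) := rfl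
  rw [hcard]
  exact IsSimpleGroup.prime_card

private lemma nontrivial_of_quotient {A : Type*} [CommGroup A] [Finite A]
    (h : Nontrivial A) : True := trivial

/- Existence of a prime-index subgroup in a nontrivial finite solvable group. -/
private lemma exists_prime_index_subgroup (G : Type*) [Group G] [Finite G] [Group.IsSolvable G]
    [Nontrivial G] : ∃ H : Subgroup G, H.index.Prime := by
  -- the commutator subgroup is proper
  have hcomm : commutator G ≠ ⊤ := by
    intro h
    have hall : ∀ n, derivedSeries G n = ⊤ := by
      intro n
      induction n with
      | zero => rfl
      | succ n ih => rw [derivedSeries_succ, ih, ← commutator_def, h]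
    obtain ⟨n, hn⟩ := Group.IsSolvable.solvable (G := G)
    rw [hall n] at hn
    obtain ⟨x, y, hxy⟩ := exists_pair_ne G
    apply hxy
    have hx : x ∈ (⊥ : Subgroup G) := hn ▸ Subgroup.mem_top x
    have hy : y ∈ (⊥ : Subgroup G) := hn ▸ Subgroup.mem_top y
    rw [Subgroup.mem_bot] at hx hy
    rw [hx, hy]
  -- the abelianization is a nontrivial finite commutative group
  have hnontriv : Nontrivial (Abelianization G) := by
    rcases subsingleton_or_nontrivial (Abelianization G) with hs | hn
    · exfalso
      apply hcomm
      rw [eq_top_iff]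
      intro x _
      have : Abelianization.of x = 1 := Subsingleton.elim _ _
      have := (QuotientGroup.eq_one_iff (N := commutator G) x).mp this
      exact this
    · exact hn
  -- find a coatom in the subgroup lattice of the abelianization
  have : Finite (Abelianization G) := Quotient.finite _
  obtain ⟨M, hM, -⟩ := (eq_top_or_exists_le_coatom (⊥ : Subgroup (Abelianization G))).resolve_left
    (by simp [bot_ne_top])
  have hp : M.index.Prime := coatom_index_prime hM
  refine ⟨M.comap Abelianization.of, ?_⟩
  have hsurj : Function.Surjective (Abelianization.of : G →* Abelianization G) :=
    fun x => QuotientGroup.mk'_surjective (commutator G) x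
  rwa [M.index_comap_of_surjective hsurj]

/- StrictMono of a snoc chain. -/
private lemma strictMono_snoc {G : Type*} [Group G] {n : ℕ} {d : Fin (n + 1) → Subgroup G}
    {T : Subgroup G} (hd : StrictMono d) (htop : ∀ i, d i < T) :
    StrictMono (Fin.snoc d T : Fin (n + 2) → Subgroup G) := by
  intro i j hij
  rcases Fin.eq_castSucc_or_eq_last j with ⟨j', rfl⟩ | rfl
  · have hi : i ≠ Fin.last (n + 1) := by
      intro h
      rw [h] at hij
      exact absurd (j'.castSucc_lt_last.trans hij) (lt_irrefl _)
    obtain ⟨i', rfl⟩ := Fin.exists_castSucc_eq.mpr hi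
    rw [Fin.snoc_castSucc, Fin.snoc_castSucc]
    exact hd (Fin.castSucc_lt_castSucc_iff.mp hij)
  · have hi : i ≠ Fin.last (n + 1) := hij.ne
    obtain ⟨i', rfl⟩ := Fin.exists_castSucc_eq.mpr hi
    rw [Fin.snoc_castSucc, Fin.snoc_last]
    exact htop i'

/- Lower bound chain existence, by strong induction on the order. -/
private lemma exists_chain (n : ℕ) : ∀ (G : Type u) [Group G] [Fintype G] [Group.IsSolvable G],
    Fintype.card G ≤ n →
    ∃ c : Fin ((Fintype.card G).primeFactorsList.length + 1) → Subgroup G, StrictMono c := by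
  induction n using Nat.strong_induction_on with
  | _ n ih =>
    intro G _ _ _ hcard
    rcases subsingleton_or_nontrivial G with hs | hn
    · have h1 : Fintype.card G = 1 := Fintype.card_eq_one_iff_nonempty_unique.mpr
        ⟨⟨⟨1⟩, fun x => Subsingleton.elim x 1⟩⟩
      have h2 : (Fintype.card G).primeFactorsList.length = 0 := by
        rw [h1]; simp
      rw [h2]
      refine ⟨fun _ => ⊥, fun i j hij => absurd ?_ hij.ne⟩
      have : (i : ℕ) = (j : ℕ) := by omega
      exact Fin.ext this
    · obtain ⟨H, hp⟩ := exists_prime_index_subgroup G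
      have hHne : H ≠ ⊤ := fun h => by
        rw [h, Subgroup.index_top] at hp; exact hp.one_lt.ne' rfl
      have hHlt : H < ⊤ := lt_top_iff_ne_top.mpr hHne
      have hmul : Nat.card H * H.index = Nat.card G := Subgroup.card_mul_index H
      have hHcard_pos : 0 < Nat.card H := Nat.card_pos
      have hHlt_card : Nat.card H < Nat.card G := by
        have := hp.one_lt
        nlinarith
      have hHfin : Fintype H := Fintype.ofFinite H
      have hHsolv : Group.IsSolvable H := inferInstance
      have hHcard_n : Fintype.card H < n := by
        rw [← Nat.card_eq_fintype_card] at hcard ⊢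
        omega
      obtain ⟨c, hc⟩ := ih (Fintype.card H) hHcard_n H (le_refl _)
      -- map the chain into G and append ⊤
      set d : Fin ((Fintype.card H).primeFactorsList.length + 1) → Subgroup G :=
        fun i => (c i).map H.subtype with hd_def
      have hd : StrictMono d := by
        intro i j hij
        have hle : d i ≤ d j := Subgroup.map_mono (hc hij).le
        have hne : d i ≠ d j :=
          fun h => (hc hij).ne (Subgroup.map_injective H.subtype_injective h)
        exact lt_of_le_of_ne hle hne
      have hdtop : ∀ i, d i < ⊤ := by
        intro i
        refine lt_of_le_of_lt ?_ hHlt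
        exact Subgroup.map_subtype_le (c i)
      have homega : (Fintype.card G).primeFactorsList.length =
          (Fintype.card H).primeFactorsList.length + 1 := by
        have hG : Fintype.card G = Fintype.card H * H.index := by
          rw [← Nat.card_eq_fintype_card, ← Nat.card_eq_fintype_card, hmul]
        rw [hG]
        have hH0 : Fintype.card H ≠ 0 := Fintype.card_ne_zero
        have := (Nat.perm_primeFactorsList_mul hH0 hp.ne_zero).length_eq
        rw [this, List.length_append, Nat.primeFactorsList_prime hp]
        rfl
      rw [homega]
      exact ⟨Fin.snoc d ⊤, strictMono_snoc hd hdtop⟩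

/-- Every finite soluble group `G` satisfies `l(G) = Ω(|G|)`, where `Ω(m)` is the number
of prime divisors of `m` counted with multiplicity. -/
theorem groupLength_eq_Omega_of_solvable (G : Type*) [Group G] [Fintype G] [Group.IsSolvable G] :
    groupLength G = (Fintype.card G).primeFactorsList.length := by
  set Ω := (Fintype.card G).primeFactorsList.length with hΩ
  have hmem : Ω ∈ {k : ℕ | ∃ c : Fin (k + 1) → Subgroup G, StrictMono c} := by
    obtain ⟨c, hc⟩ := exists_chain (Fintype.card G) G (le_refl _)
    exact ⟨c, hc⟩
  have hbdd : ∀ k ∈ {k : ℕ | ∃ c : Fin (k + 1) → Subgroup G, StrictMono c}, k ≤ Ω := by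
    rintro k ⟨c, hc⟩
    exact chain_le_omega c hc
  refine le_antisymm ?_ ?_
  · exact csSup_le ⟨Ω, hmem⟩ hbdd
  · exact le_csSup ⟨Ω, hbdd⟩ hmem
end

section
/- Let S be a finite semigroup and let I be a non-empty two-sided ideal of S. Then l(S) = l(I) + l(S/I), where S/I is the Rees quotient of S by I. -/
/-- The length of a semigroup `M` (stated for any multiplicative structure): the largest
number of non-empty subsemigroups of `M` in a chain, minus 1; equivalently the largest
`k` for which there is a strictly increasing chain of `k + 1` non-empty subsemigroups. -/
noncomputable def semigroupLength (M : Type*) [Mul M] : ℕ :=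
  sSup {k : ℕ | ∃ c : Fin (k + 1) → Subsemigroup M,
    StrictMono c ∧ ∀ i, ((c i : Set M)).Nonempty}

/-- The Rees quotient `S/I`: the elements of `S \ I` together with an extra zero
element (represented by `none`). -/
def ReesQuotient {S : Type*} [Mul S] (I : Set S) : Type _ :=
  Option {x : S // x ∉ I}

/-- Multiplication in the Rees quotient: `x * y` is the product in `S` if that product
lies outside `I`, and the zero element `none` otherwise; `none` is absorbing. -/
noncomputable instance {S : Type*} [Mul S] (I : Set S) : Mul (ReesQuotient I) :=
  ⟨fun a b =>
    match a, b with
    | some x, some y =>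
        letI := Classical.dec ((x.1 * y.1) ∈ I)
        if h : (x.1 * y.1) ∈ I then (none : ReesQuotient I)
        else (some ⟨x.1 * y.1, h⟩ : ReesQuotient I)
    | _, _ => (none : ReesQuotient I)⟩

section infra
variable {M : Type*} [Mul M]

def chainSet (M : Type*) [Mul M] : Set ℕ :=
  {k : ℕ | ∃ c : Fin (k + 1) → Subsemigroup M,
    StrictMono c ∧ ∀ i, ((c i : Set M)).Nonempty}

lemma steps_mono {α : Type*} [Preorder α] {f : ℕ → α} {k : ℕ}
    (h : ∀ i, i < k → f i < f (i+1)) :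
    ∀ i j, i ≤ j → j ≤ k → f i ≤ f j := by
  intro i j hij hjk
  induction j with
  | zero => simp_all
  | succ m ih =>
    rcases Nat.lt_or_ge i (m+1) with h1 | h1
    · exact (ih (by omega) (by omega)).trans (h m (by omega)).le
    · have : i = m + 1 := by omega
      subst this; exact le_rfl

lemma mem_chainSet_iff (k : ℕ) : k ∈ chainSet M ↔
    ∃ f : ℕ → Subsemigroup M, (∀ i, i < k → f i < f (i+1)) ∧
      (∀ i, i ≤ k → ((f i : Set M)).Nonempty) := by
  constructor
  · rintro ⟨c, hc, hne⟩
    refine ⟨fun i => c ⟨min i k, by omega⟩, fun i hi => ?_, fun i hi => hne _⟩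
    apply hc
    simp [Fin.lt_def]; omega
  · rintro ⟨f, hf, hne⟩
    refine ⟨fun i => f i.val, fun i j hij => ?_, fun i => hne _ (by omega)⟩
    rcases lt_or_ge i.val j.val with h | h
    · exact lt_of_lt_of_le (hf i.val (by omega)) (steps_mono hf (i.val+1) j.val h (by omega))
    · exact absurd (Fin.lt_def.mp hij) (by omega)

lemma bddAbove_chainSet [Finite M] : BddAbove (chainSet M) := by
  have : Finite (Subsemigroup M) :=
    Finite.of_injective (fun T => (T : Set M)) SetLike.coe_injective
  refine ⟨Nat.card (Subsemigroup M), fun k hk => ?_⟩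
  obtain ⟨c, hc, -⟩ := hk
  have h := Nat.card_le_card_of_injective c hc.injective
  simp only [Nat.card_eq_fintype_card, Fintype.card_fin] at h
  omega

lemma zero_mem_chainSet [Nonempty M] : 0 ∈ chainSet M := by
  refine ⟨fun _ => ⊤, fun i j hij => absurd (Fin.lt_def.mp hij) (by omega), fun i => ?_⟩
  simpa using Set.univ_nonempty

lemma le_semigroupLength [Finite M] {k : ℕ} (hk : k ∈ chainSet M) :
    k ≤ semigroupLength M := le_csSup bddAbove_chainSet hk

lemma semigroupLength_mem [Finite M] [Nonempty M] :
    semigroupLength M ∈ chainSet M :=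
  Nat.sSup_mem ⟨0, zero_mem_chainSet⟩ bddAbove_chainSet

lemma subsemigroup_nonempty_iff (T : Subsemigroup M) :
    ((T : Set M)).Nonempty ↔ T ≠ ⊥ := by
  constructor
  · rintro ⟨x, hx⟩ rfl; exact absurd hx (by simp)
  · intro h
    rcases Set.eq_empty_or_nonempty (T : Set M) with he | hne
    · exact absurd (SetLike.ext' (by simpa using he)) h
    · exact hne

lemma exists_fun_of_chain (k : ℕ) : ∀ T : Finset (Subsemigroup M), T.card = k + 1 →
    (∀ x ∈ T, ∀ y ∈ T, x ≤ y ∨ y ≤ x) →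
    ∃ g : ℕ → Subsemigroup M, (∀ i, i < k → g i < g (i+1)) ∧ (∀ i, i ≤ k → g i ∈ T) := by
  induction k with
  | zero =>
    intro T hT _
    obtain ⟨x, hx⟩ := Finset.card_pos.mp (show 0 < T.card by omega)
    exact ⟨fun _ => x, fun i hi => absurd hi (by omega), fun i _ => hx⟩
  | succ k ih =>
    intro T hT hchain
    classical
    obtain ⟨m, hm, hmax⟩ := T.exists_maximal (Finset.card_pos.mp (by omega))
    obtain ⟨g, hg, hgt⟩ := ih (T.erase m) (by rw [Finset.card_erase_of_mem hm]; omega)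
      (fun x hx y hy => hchain x (Finset.mem_of_mem_erase hx) y (Finset.mem_of_mem_erase hy))
    refine ⟨fun i => if i ≤ k then g i else m, fun i hi => ?_, fun i hi => ?_⟩
    · rcases Nat.lt_or_ge i k with h | h
      · have h1 : i ≤ k := by omega
        have h2 : i + 1 ≤ k := by omega
        simpa [h1, h2] using hg i h
      · have hik : i = k := by omega
        subst hik
        have h2 : ¬ (i + 1 ≤ i) := by omega
        simp only [le_refl, if_pos, h2, if_neg]
        have hgk := hgt i le_rfl
        have hne : g i ≠ m := Finset.ne_of_mem_erase hgk
        rcases hchain _ (Finset.mem_of_mem_erase hgk) m hm with h1 | h1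
        · exact lt_of_le_of_ne h1 hne
        · exact absurd (lt_of_le_of_ne h1 (Ne.symm hne)) (fun hlt => hlt.not_ge (hmax (Finset.mem_of_mem_erase hgk) h1))
    · by_cases h : i ≤ k
      · simp only [h, if_pos]; exact Finset.mem_of_mem_erase (hgt i h)
      · simp only [h, if_neg]; exact hm

lemma chain_card_le [Finite M] (T : Finset (Subsemigroup M))
    (hchain : ∀ x ∈ T, ∀ y ∈ T, x ≤ y ∨ y ≤ x)
    (hne : ∀ x ∈ T, ((x : Set M)).Nonempty) :
    T.card ≤ semigroupLength M + 1 := by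
  rcases Nat.eq_zero_or_pos T.card with h | h
  · omega
  · obtain ⟨g, hg, hgt⟩ := exists_fun_of_chain (T.card - 1) T (by omega) hchain
    have : T.card - 1 ∈ chainSet M := by
      rw [mem_chainSet_iff]
      exact ⟨g, hg, fun i hi => hne _ (hgt i hi)⟩
    have := le_semigroupLength this
    omega

lemma phi_steps {φ : ℕ → ℕ} {n : ℕ} (h : ∀ i, i < n → φ i < φ (i+1)) :
    φ 0 + n ≤ φ n := by
  induction n with
  | zero => simp
  | succ m ih =>
    have := h m (by omega)
    have := ih (fun i hi => h i (by omega))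
    omega

end infra

section rq
variable {S : Type*} [Mul S] {I : Set S}

def rq0 : ReesQuotient I := none

def rqs (x : {x : S // x ∉ I}) : ReesQuotient I := some x

lemma rqs_injective : Function.Injective (rqs (S := S) (I := I)) := by
  intro a b h
  exact Option.some_injective _ h

lemma rqs_ne_rq0 (x : {x : S // x ∉ I}) : rqs x ≠ rq0 := by
  intro h; exact Option.some_ne_none x h

instance (priority := high) [Finite S] : Finite (ReesQuotient I) := by
  cases nonempty_fintype {x : S // x ∉ I}
  exact inferInstanceAs (Finite (Option {x : S // x ∉ I}))

instance (priority := high) : Nonempty (ReesQuotient I) := ⟨rq0⟩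

lemma rqCases (a : ReesQuotient I) : a = rq0 ∨ ∃ x, a = rqs x :=
  Option.rec (Or.inl rfl) (fun x => Or.inr ⟨x, rfl⟩) a

lemma rq0_mul (a : ReesQuotient I) : rq0 * a = rq0 := by
  rcases rqCases a with rfl | ⟨x, rfl⟩ <;> rfl

lemma rq_mul_rq0 (a : ReesQuotient I) : a * rq0 = rq0 := by
  rcases rqCases a with rfl | ⟨x, rfl⟩ <;> rfl

lemma rqs_mul_rqs_of_mem {x y : {x : S // x ∉ I}} (h : x.1 * y.1 ∈ I) :
    rqs x * rqs y = rq0 := by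
  show (match (some x : ReesQuotient I), (some y : ReesQuotient I) with
    | some x, some y =>
        letI := Classical.dec ((x.1 * y.1) ∈ I)
        if h : (x.1 * y.1) ∈ I then (none : ReesQuotient I)
        else (some ⟨x.1 * y.1, h⟩ : ReesQuotient I)
    | _, _ => (none : ReesQuotient I)) = _
  exact dif_pos h

lemma rqs_mul_rqs_of_not_mem {x y : {x : S // x ∉ I}} (h : x.1 * y.1 ∉ I) :
    rqs x * rqs y = rqs ⟨x.1 * y.1, h⟩ := by
  show (match (some x : ReesQuotient I), (some y : ReesQuotient I) with
    | some x, some y =>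
        letI := Classical.dec ((x.1 * y.1) ∈ I)
        if h : (x.1 * y.1) ∈ I then (none : ReesQuotient I)
        else (some ⟨x.1 * y.1, h⟩ : ReesQuotient I)
    | _, _ => (none : ReesQuotient I)) = _
  exact dif_neg h

end rq

section subs
variable {S : Type*} [Mul S] (I : Subsemigroup S)

/-- the zero subsemigroup of the Rees quotient -/
def Zsg : Subsemigroup (ReesQuotient (I : Set S)) where
  carrier := {a | a = rq0}
  mul_mem' := by rintro a b rfl rfl; simp [rq0_mul]

lemma mem_Zsg {a : ReesQuotient (I : Set S)} : a ∈ Zsg I ↔ a = rq0 := Iff.rfl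

lemma Zsg_nonempty : ((Zsg I : Set (ReesQuotient (I : Set S)))).Nonempty := ⟨rq0, rfl⟩

/-- adjoining zero to a subsemigroup of the Rees quotient -/
def addZ (T : Subsemigroup (ReesQuotient (I : Set S))) :
    Subsemigroup (ReesQuotient (I : Set S)) where
  carrier := insert rq0 (T : Set (ReesQuotient (I : Set S)))
  mul_mem' := by
    rintro a b (rfl | ha) hb
    · rw [rq0_mul]; exact Or.inl rfl
    · rcases hb with rfl | hb
      · rw [rq_mul_rq0]; exact Or.inl rfl
      · exact Or.inr (T.mul_mem ha hb)

lemma mem_addZ {T : Subsemigroup (ReesQuotient (I : Set S))} {a : ReesQuotient (I : Set S)} :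
    a ∈ addZ I T ↔ a = rq0 ∨ a ∈ T := by
  simp [addZ, Subsemigroup.mem_mk]

lemma addZ_mono {T T' : Subsemigroup (ReesQuotient (I : Set S))} (h : T ≤ T') :
    addZ I T ≤ addZ I T' := by
  intro a ha
  rcases (mem_addZ I).mp ha with rfl | ha
  · exact (mem_addZ I).mpr (Or.inl rfl)
  · exact (mem_addZ I).mpr (Or.inr (h ha))

/-- pulling a subsemigroup of the Rees quotient back to `S`, together with `I` -/
def Lsg (hideal : ∀ a ∈ I, ∀ s : S, s * a ∈ I ∧ a * s ∈ I)
    (T : Subsemigroup (ReesQuotient (I : Set S))) : Subsemigroup S where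
  carrier := (I : Set S) ∪ {s | ∃ h : s ∉ (I : Set S), rqs ⟨s, h⟩ ∈ T}
  mul_mem' := by
    rintro a b (ha | ⟨ha, haT⟩) hb
    · exact Or.inl (hideal a ha b).2
    · rcases hb with hb | ⟨hb, hbT⟩
      · exact Or.inl (hideal b hb a).1
      · by_cases hab : a * b ∈ (I : Set S)
        · exact Or.inl hab
        · refine Or.inr ⟨hab, ?_⟩
          have := T.mul_mem haT hbT
          rwa [rqs_mul_rqs_of_not_mem hab] at this

variable {I}
variable (hideal : ∀ a ∈ I, ∀ s : S, s * a ∈ I ∧ a * s ∈ I)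

lemma le_Lsg (T : Subsemigroup (ReesQuotient (I : Set S))) {x : S} (hx : x ∈ I) :
    x ∈ Lsg I hideal T := Or.inl hx

lemma Lsg_mono {T T' : Subsemigroup (ReesQuotient (I : Set S))} (h : T ≤ T') :
    Lsg I hideal T ≤ Lsg I hideal T' := by
  rintro x (hx | ⟨hx, hxT⟩)
  · exact Or.inl hx
  · exact Or.inr ⟨hx, h hxT⟩

lemma Lsg_Zsg : Lsg I hideal (Zsg I) = I := by
  ext x
  constructor
  · rintro (hx | ⟨hx, hxT⟩)
    · exact hx
    · exact absurd ((mem_Zsg I).mp hxT) (rqs_ne_rq0 _)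
  · exact fun hx => Or.inl hx

lemma Lsg_lt {T T' : Subsemigroup (ReesQuotient (I : Set S))} (h : T ≤ T')
    {x : {x : S // x ∉ (I : Set S)}} (hxT' : rqs x ∈ T') (hxT : rqs x ∉ T) :
    Lsg I hideal T < Lsg I hideal T' := by
  refine lt_of_le_of_ne (Lsg_mono hideal h) (fun he => ?_)
  have hx : x.1 ∈ Lsg I hideal T' := Or.inr ⟨x.2, by simpa using hxT'⟩
  rw [← he] at hx
  rcases hx with hx | ⟨hx, hxT2⟩
  · exact x.2 hx
  · exact hxT (by simpa using hxT2)

/-- a subsemigroup of `↥I` pushed into `S` -/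
def Msg (u : Subsemigroup I) : Subsemigroup S where
  carrier := {s : S | ∃ h : s ∈ I, (⟨s, h⟩ : I) ∈ u}
  mul_mem' := by
    rintro a b ⟨ha, hau⟩ ⟨hb, hbu⟩
    exact ⟨I.mul_mem ha hb, u.mul_mem hau hbu⟩

lemma Msg_le (u : Subsemigroup I) {x : S} (hx : x ∈ Msg u) : x ∈ I := hx.1

lemma Msg_lt {u u' : Subsemigroup I} (h : u < u') : Msg u < Msg u' := by
  obtain ⟨x, hxu', hxu⟩ := SetLike.exists_of_lt h
  refine lt_of_le_of_ne (fun s hs => ⟨hs.1, h.le hs.2⟩) (fun he => ?_)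
  have : (x : S) ∈ Msg u' := ⟨x.2, by simpa using hxu'⟩
  rw [← he] at this
  obtain ⟨h1, h2⟩ := this
  exact hxu (by simpa using h2)

lemma Msg_nonempty {u : Subsemigroup I} (h : ((u : Set I)).Nonempty) :
    ((Msg u : Set S)).Nonempty := by
  obtain ⟨x, hx⟩ := h
  exact ⟨x, x.2, by simpa using hx⟩

/-- pushing a subsemigroup of `S` to the Rees quotient -/
def Gsg (c : Subsemigroup S) : Subsemigroup (ReesQuotient (I : Set S)) where
  carrier := {t | (t = rq0 ∧ ∃ x ∈ (I : Set S), x ∈ c) ∨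
    ∃ x : {x : S // x ∉ (I : Set S)}, x.1 ∈ c ∧ t = rqs x}
  mul_mem' := by
    rintro a b (⟨rfl, hx⟩ | ⟨x, hxc, rfl⟩) hb
    · rw [rq0_mul]; exact Or.inl ⟨rfl, hx⟩
    · rcases hb with ⟨rfl, hy⟩ | ⟨y, hyc, rfl⟩
      · rw [rq_mul_rq0]; exact Or.inl ⟨rfl, hy⟩
      · by_cases h : x.1 * y.1 ∈ (I : Set S)
        · rw [rqs_mul_rqs_of_mem h]
          exact Or.inl ⟨rfl, x.1 * y.1, h, c.mul_mem hxc hyc⟩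
        · rw [rqs_mul_rqs_of_not_mem h]
          exact Or.inr ⟨⟨x.1 * y.1, h⟩, c.mul_mem hxc hyc, rfl⟩

lemma rq0_mem_Gsg_iff {c : Subsemigroup S} :
    rq0 ∈ Gsg (I := I) c ↔ ∃ x ∈ (I : Set S), x ∈ c := by
  constructor
  · rintro (⟨-, hx⟩ | ⟨x, -, hx⟩)
    · exact hx
    · exact absurd hx.symm (rqs_ne_rq0 x)
  · exact fun hx => Or.inl ⟨rfl, hx⟩

lemma rqs_mem_Gsg_iff {c : Subsemigroup S} {x : {x : S // x ∉ (I : Set S)}} :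
    rqs x ∈ Gsg (I := I) c ↔ x.1 ∈ c := by
  constructor
  · rintro (⟨hx, -⟩ | ⟨y, hy, hxy⟩)
    · exact absurd hx (rqs_ne_rq0 x)
    · cases rqs_injective hxy; exact hy
  · exact fun hx => Or.inr ⟨x, hx, rfl⟩

lemma Gsg_mono {c c' : Subsemigroup S} (h : c ≤ c') : Gsg (I := I) c ≤ Gsg (I := I) c' := by
  rintro t (⟨rfl, x, hx1, hx2⟩ | ⟨x, hx, rfl⟩)
  · exact Or.inl ⟨rfl, x, hx1, h hx2⟩
  · exact Or.inr ⟨x, h hx, rfl⟩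

/-- restricting a subsemigroup of `S` to `I` -/
def Fsg (c : Subsemigroup S) : Subsemigroup I where
  carrier := {x : I | (x : S) ∈ c}
  mul_mem' := by
    intro a b ha hb
    exact c.mul_mem ha hb

lemma mem_Fsg {c : Subsemigroup S} {x : I} : x ∈ Fsg (I := I) c ↔ (x : S) ∈ c := Iff.rfl

lemma Fsg_mono {c c' : Subsemigroup S} (h : c ≤ c') : Fsg (I := I) c ≤ Fsg (I := I) c' :=
  fun _ hx => h hx

end subs

section norm
variable {S : Type*} [Mul S] [Finite S] (I : Subsemigroup S)

/-- There is an optimal chain in the Rees quotient starting at the zero subsemigroup. -/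
lemma exists_normalized_chain :
    ∃ g : ℕ → Subsemigroup (ReesQuotient (I : Set S)),
      (∀ i, i < semigroupLength (ReesQuotient (I : Set S)) → g i < g (i+1)) ∧
      (∀ i, i ≤ semigroupLength (ReesQuotient (I : Set S)) →
        ((g i : Set (ReesQuotient (I : Set S)))).Nonempty) ∧
      g 0 = Zsg I := by
  classical
  set b := semigroupLength (ReesQuotient (I : Set S)) with hb
  obtain ⟨f, hf, hfne⟩ := (mem_chainSet_iff b).mp (semigroupLength_mem)
  by_cases hall : ∀ i ≤ b, rq0 ∈ f i
  · have h0 : f 0 = Zsg I := by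
      by_contra hne0
      have hZle : Zsg I ≤ f 0 := by
        rintro x rfl
        exact hall 0 (by omega)
      have hZlt : Zsg I < f 0 := lt_of_le_of_ne hZle (Ne.symm hne0)
      have : b + 1 ∈ chainSet (ReesQuotient (I : Set S)) := by
        rw [mem_chainSet_iff]
        refine ⟨fun i => if i = 0 then Zsg I else f (i-1), fun i hi => ?_, fun i hi => ?_⟩
        · rcases Nat.eq_zero_or_pos i with rfl | hpos
          · simpa using hZlt
          · have h1 : i ≠ 0 := by omega
            have h2 : i + 1 ≠ 0 := by omega
            simp only [h1, if_neg, h2]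
            have : i - 1 + 1 = i := by omega
            rw [← this]
            exact hf (i-1) (by omega)
        · rcases Nat.eq_zero_or_pos i with rfl | hpos
          · simpa using Zsg_nonempty I
          · have h1 : i ≠ 0 := by omega
            simp only [h1, if_neg]
            exact hfne (i-1) (by omega)
      have := le_semigroupLength this
      omega
    exact ⟨f, hf, hfne, h0⟩
  · push_neg at hall
    obtain ⟨i₀, hi₀b, hi₀⟩ := hall
    set f' : ℕ → Subsemigroup (ReesQuotient (I : Set S)) := fun i => addZ I (f i) with hf'
    have hfmono : ∀ i j, i ≤ j → j ≤ b → f i ≤ f j := steps_mono hf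
    have hne' : ∀ s, s ≤ b → Zsg I < f' s := by
      intro s hs
      have hle : Zsg I ≤ f' s := by
        rintro x rfl
        exact (mem_addZ I).mpr (Or.inl rfl)
      refine lt_of_le_of_ne hle (fun he => ?_)
      rcases le_total s i₀ with h | h
      · obtain ⟨x, hx⟩ := hfne s hs
        have : x ∈ f' s := (mem_addZ I).mpr (Or.inr hx)
        rw [← he] at this
        have : x = rq0 := this
        subst this
        exact hi₀ (hfmono s i₀ h hi₀b hx)
      · obtain ⟨x, hx⟩ := hfne i₀ hi₀b
        have hx2 : x ∈ f s := hfmono i₀ s h hs hx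
        have : x ∈ f' s := (mem_addZ I).mpr (Or.inr hx2)
        rw [← he] at this
        have : x = rq0 := this
        subst this
        exact hi₀ hx
    by_cases hcol : ∃ t, t < b ∧ f' t = f' (t+1)
    · obtain ⟨t, htb, heq⟩ := hcol
      have h0t : rq0 ∉ f t := by
        intro h0
        have hZf : addZ I (f t) = f t := by
          apply le_antisymm
          · intro x hx
            rcases (mem_addZ I).mp hx with rfl | hx
            · exact h0
            · exact hx
          · intro x hx; exact (mem_addZ I).mpr (Or.inr hx)
        have : f (t+1) ≤ f t := by
          intro x hx
          have h5 : x ∈ f' (t+1) := (mem_addZ I).mpr (Or.inr hx)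
          rw [← heq] at h5
          rcases (mem_addZ I).mp h5 with rfl | h6
          · exact h0
          · exact h6
        exact absurd (hf t htb) (by simp [this.not_gt])
      have h0t1 : rq0 ∈ f (t+1) := by
        obtain ⟨x, hx1, hx2⟩ := SetLike.exists_of_lt (hf t htb)
        have : x ∈ f' t := heq ▸ ((mem_addZ I).mpr (Or.inr hx1))
        rcases (mem_addZ I).mp this with rfl | hx
        · exact hx1
        · exact absurd hx hx2
      -- strictness of f' between indices both ≤ t, and > t
      have hstrict_le : ∀ i, 0 < i → i ≤ t → f' (i-1) < f' i := by
        intro i hpos hit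
        obtain ⟨x, hx1, hx2⟩ := SetLike.exists_of_lt
          (hf (i-1) (by omega) : f (i-1) < f (i-1+1))
        have hxi : x ∈ f i := by rwa [show i - 1 + 1 = i by omega] at hx1
        have hxne : x ≠ rq0 := by
          rintro rfl
          exact h0t (hfmono i t hit (by omega) hxi)
        refine lt_of_le_of_ne (addZ_mono I (hfmono (i-1) i (by omega) (by omega))) (fun he => ?_)
        have : x ∈ f' (i-1) := he ▸ ((mem_addZ I).mpr (Or.inr hxi))
        rcases (mem_addZ I).mp this with rfl | hx
        · exact hxne rfl
        · exact hx2 hx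
      have hstrict_gt : ∀ i, t < i → i < b → f' i < f' (i+1) := by
        intro i hti hib
        obtain ⟨x, hx1, hx2⟩ := SetLike.exists_of_lt (hf i hib)
        have hxne : x ≠ rq0 := by
          rintro rfl
          exact hx2 (hfmono (t+1) i (by omega) (by omega) h0t1)
        refine lt_of_le_of_ne (addZ_mono I (hfmono i (i+1) (by omega) (by omega))) (fun he => ?_)
        have : x ∈ f' i := he ▸ ((mem_addZ I).mpr (Or.inr hx1))
        rcases (mem_addZ I).mp this with rfl | hx
        · exact hxne rfl
        · exact hx2 hx
      refine ⟨fun i => if i = 0 then Zsg I else if i ≤ t then f' (i-1) else f' i,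
        fun i hi => ?_, fun i hi => ?_, by simp⟩
      · rcases Nat.eq_zero_or_pos i with rfl | hpos
        · simp only [if_pos]
          by_cases h1 : 1 ≤ t
          · have : (1 : ℕ) ≠ 0 := by omega
            simp only [this, if_neg, h1, if_pos]
            exact hne' 0 (by omega)
          · have : (1 : ℕ) ≠ 0 := by omega
            simp only [this, if_neg, h1, if_neg]
            exact hne' 1 (by omega)
        · have h1 : i ≠ 0 := by omega
          have h2 : i + 1 ≠ 0 := by omega
          simp only [h1, if_neg, h2]
          by_cases h3 : i + 1 ≤ t
          · have h4 : i ≤ t := by omega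
            simp only [h3, if_pos, h4]
            have := hstrict_le i hpos h4
            rwa [show i + 1 - 1 = i by omega]
          · by_cases h4 : i ≤ t
            · -- i = t, next is f' (t+1) = f' t
              have hit : i = t := by omega
              simp only [h3, if_neg, h4, if_pos]
              subst hit
              rw [← heq]
              exact hstrict_le i hpos le_rfl
            · simp only [h3, if_neg, h4]
              exact hstrict_gt i (by omega) hi
      · rcases Nat.eq_zero_or_pos i with rfl | hpos
        · simpa using Zsg_nonempty I
        · have h1 : i ≠ 0 := by omega
          simp only [h1, if_neg]
          by_cases h4 : i ≤ t
          · simp only [h4, if_pos]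
            exact ⟨rq0, (mem_addZ I).mpr (Or.inl rfl)⟩
          · simp only [h4, if_neg]
            exact ⟨rq0, (mem_addZ I).mpr (Or.inl rfl)⟩
    · push_neg at hcol
      exfalso
      have : b + 1 ∈ chainSet (ReesQuotient (I : Set S)) := by
        rw [mem_chainSet_iff]
        refine ⟨fun i => if i = 0 then Zsg I else f' (i-1), fun i hi => ?_, fun i hi => ?_⟩
        · rcases Nat.eq_zero_or_pos i with rfl | hpos
          · simpa using hne' 0 (by omega)
          · have h1 : i ≠ 0 := by omega
            have h2 : i + 1 ≠ 0 := by omega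
            simp only [if_neg h1, if_neg h2]
            have hle : f' (i-1) ≤ f' i := addZ_mono I (hfmono (i-1) i (by omega) (by omega))
            have hne2 := hcol (i-1) (by omega)
            rw [show i - 1 + 1 = i by omega] at hne2
            rw [show i + 1 - 1 = i by omega]
            exact lt_of_le_of_ne hle hne2
        · rcases Nat.eq_zero_or_pos i with rfl | hpos
          · simpa using Zsg_nonempty I
          · have h1 : i ≠ 0 := by omega
            simp only [h1, if_neg]
            exact ⟨rq0, (mem_addZ I).mpr (Or.inl rfl)⟩
      have := le_semigroupLength this
      omega

end norm

/-- Let `S` be a finite semigroup and let `I` be a non-empty two-sided ideal of `S`.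
Then `l(S) = l(I) + l(S/I)`, where `S/I` is the Rees quotient of `S` by `I`. -/
theorem semigroupLength_eq_ideal_add_reesQuotient (S : Type*) [Semigroup S] [Fintype S]
    (I : Subsemigroup S) (hne : (I : Set S).Nonempty)
    (hideal : ∀ a ∈ I, ∀ s : S, s * a ∈ I ∧ a * s ∈ I) :
    semigroupLength S = semigroupLength I + semigroupLength (ReesQuotient (I : Set S)) := by
  classical
  obtain ⟨x₀, hx₀⟩ := hne
  have hSne : Nonempty S := ⟨x₀⟩
  have hIne : Nonempty I := ⟨⟨x₀, hx₀⟩⟩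
  set a := semigroupLength I with ha
  set b := semigroupLength (ReesQuotient (I : Set S)) with hb
  set n := semigroupLength S with hn
  have hge : a + b ≤ n := by
    obtain ⟨fc, hfc, hfcne⟩ := (mem_chainSet_iff a).mp (semigroupLength_mem (M := I))
    obtain ⟨g, hg, hgne, hg0⟩ := exists_normalized_chain I
    have hgmono : ∀ i j, i ≤ j → j ≤ b → g i ≤ g j := steps_mono hg
    have : a + b ∈ chainSet S := by
      rw [mem_chainSet_iff]
      refine ⟨fun i => if i ≤ a then Msg (fc i) else Lsg I hideal (g (i - a)),
        fun i hi => ?_, fun i hi => ?_⟩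
      · by_cases h1 : i + 1 ≤ a
        · have h2 : i ≤ a := by omega
          simp only [h1, if_pos, h2]
          exact Msg_lt (hfc i (by omega))
        · by_cases h2 : i ≤ a
          · have hia : i = a := by omega
            have hblt : 0 < b := by omega
            show (if i ≤ a then Msg (fc i) else Lsg I hideal (g (i - a))) <
              (if i + 1 ≤ a then Msg (fc (i+1)) else Lsg I hideal (g (i + 1 - a)))
            rw [if_pos h2, if_neg h1, show i + 1 - a = 1 by omega]
            obtain ⟨x, hx1, hx2⟩ := SetLike.exists_of_lt (hg0 ▸ hg 0 hblt)
            rcases rqCases x with rfl | ⟨s, rfl⟩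
            · exact absurd ((mem_Zsg I).mpr rfl) hx2
            · refine lt_of_le_of_ne ?_ (fun he => ?_)
              · intro y hy
                exact le_Lsg hideal _ (Msg_le _ hy)
              · have : s.1 ∈ Lsg I hideal (g 1) := Or.inr ⟨s.2, by simpa using hx1⟩
                rw [← he] at this
                exact s.2 (Msg_le _ this)
          · simp only [h2, if_neg, show ¬ (i + 1 ≤ a) by omega, if_neg]
            have hstep : i - a < b := by omega
            obtain ⟨x, hx1, hx2⟩ := SetLike.exists_of_lt (hg (i - a) hstep)
            rcases rqCases x with rfl | ⟨s, rfl⟩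
            · exfalso
              have : rq0 ∈ g (i - a) := by
                have := hgmono 0 (i - a) (by omega) (by omega)
                exact this (hg0 ▸ (mem_Zsg I).mpr rfl)
              exact hx2 this
            · rw [show i + 1 - a = (i - a) + 1 by omega]
              exact Lsg_lt hideal (le_of_lt (hg (i-a) hstep)) hx1 hx2
      · by_cases h : i ≤ a
        · simp only [h, if_pos]
          exact Msg_nonempty (hfcne i h)
        · simp only [h, if_neg]
          exact ⟨x₀, le_Lsg hideal _ hx₀⟩
    exact le_semigroupLength this
  have hle : n ≤ a + b := by
    obtain ⟨fS, hfS, hfSne⟩ := (mem_chainSet_iff n).mp (semigroupLength_mem (M := S))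
    have hfSmono : ∀ i j, i ≤ j → j ≤ n → fS i ≤ fS j := steps_mono hfS
    set Fc : ℕ → Subsemigroup I := fun i => Fsg (fS i) with hFc
    set Gc : ℕ → Subsemigroup (ReesQuotient (I : Set S)) := fun i => Gsg (fS i) with hGc
    have hFmono : ∀ i j, i ≤ j → j ≤ n → Fc i ≤ Fc j :=
      fun i j hij hjn => Fsg_mono (hfSmono i j hij hjn)
    have hGmono : ∀ i j, i ≤ j → j ≤ n → Gc i ≤ Gc j :=
      fun i j hij hjn => Gsg_mono (hfSmono i j hij hjn)
    set T1 : ℕ → Finset (Subsemigroup I) := fun i => ((Finset.Iic i).image Fc).erase ⊥ with hT1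
    set T2 : ℕ → Finset (Subsemigroup (ReesQuotient (I : Set S))) :=
      fun i => (Finset.Iic i).image Gc with hT2
    set φ : ℕ → ℕ := fun i => max (T1 i).card 1 + (T2 i).card with hφ
    have hT1sub : ∀ i, T1 i ⊆ T1 (i+1) := by
      intro i
      apply Finset.erase_subset_erase
      apply Finset.image_subset_image
      intro j hj
      simp only [Finset.mem_Iic] at hj ⊢
      omega
    have hT2sub : ∀ i, T2 i ⊆ T2 (i+1) := by
      intro i
      apply Finset.image_subset_image
      intro j hj
      simp only [Finset.mem_Iic] at hj ⊢
      omega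
    have hstep : ∀ i, i < n → φ i < φ (i+1) := by
      intro i hi
      obtain ⟨x, hx1, hx2⟩ := SetLike.exists_of_lt (hfS i hi)
      by_cases hx : x ∈ I
      · by_cases h0 : ∃ y ∈ (I : Set S), y ∈ fS i
        · -- first coordinate grows among non-bot values
          have hFnew : Fc (i+1) ∉ (Finset.Iic i).image Fc := by
            intro hmem
            obtain ⟨j, hj, hje⟩ := Finset.mem_image.mp hmem
            simp only [Finset.mem_Iic] at hj
            have hmm : (⟨x, hx⟩ : I) ∈ Fc (i+1) := hx1
            rw [← hje] at hmm
            exact hx2 (hFmono j i hj (by omega) hmm)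
          have hFbot : Fc (i+1) ≠ ⊥ := by
            rw [← subsemigroup_nonempty_iff]
            exact ⟨⟨x, hx⟩, hx1⟩
          have hmemnew : Fc (i+1) ∈ T1 (i+1) := by
            apply Finset.mem_erase_of_ne_of_mem hFbot
            exact Finset.mem_image.mpr ⟨i+1, by simp, rfl⟩
          have hnotold : Fc (i+1) ∉ T1 i := fun hmem => hFnew (Finset.mem_of_mem_erase hmem)
          have hcard1 : (T1 i).card < (T1 (i+1)).card :=
            Finset.card_lt_card ⟨hT1sub i, fun hsub => hnotold (hsub hmemnew)⟩
          have hT1pos : 0 < (T1 i).card := by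
            obtain ⟨y, hy1, hy2⟩ := h0
            refine Finset.card_pos.mpr ⟨Fc i, Finset.mem_erase_of_ne_of_mem ?_
              (Finset.mem_image.mpr ⟨i, by simp, rfl⟩)⟩
            rw [← subsemigroup_nonempty_iff]
            exact ⟨⟨y, hy1⟩, hy2⟩
          have hcard2 : (T2 i).card ≤ (T2 (i+1)).card := Finset.card_le_card (hT2sub i)
          simp only [hφ]
          omega
        · -- rq0 enters the second coordinate
          have h0new : rq0 ∈ Gc (i+1) := rq0_mem_Gsg_iff.mpr ⟨x, hx, hx1⟩
          have hGnew : Gc (i+1) ∉ T2 i := by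
            intro hmem
            obtain ⟨j, hj, hje⟩ := Finset.mem_image.mp hmem
            simp only [Finset.mem_Iic] at hj
            rw [← hje] at h0new
            have := hGmono j i hj (by omega) h0new
            exact h0 (rq0_mem_Gsg_iff.mp this)
          have hmemnew : Gc (i+1) ∈ T2 (i+1) := Finset.mem_image.mpr ⟨i+1, by simp, rfl⟩
          have hcard2 : (T2 i).card < (T2 (i+1)).card :=
            Finset.card_lt_card ⟨hT2sub i, fun hsub => hGnew (hsub hmemnew)⟩
          have hcard1 : (T1 i).card ≤ (T1 (i+1)).card := Finset.card_le_card (hT1sub i)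
          simp only [hφ]
          omega
      · -- a new nonzero element enters the second coordinate
        have hnew : rqs ⟨x, hx⟩ ∈ Gc (i+1) := rqs_mem_Gsg_iff.mpr hx1
        have hGnew : Gc (i+1) ∉ T2 i := by
          intro hmem
          obtain ⟨j, hj, hje⟩ := Finset.mem_image.mp hmem
          simp only [Finset.mem_Iic] at hj
          rw [← hje] at hnew
          have := hGmono j i hj (by omega) hnew
          exact hx2 (rqs_mem_Gsg_iff.mp this)
        have hmemnew : Gc (i+1) ∈ T2 (i+1) := Finset.mem_image.mpr ⟨i+1, by simp, rfl⟩
        have hcard2 : (T2 i).card < (T2 (i+1)).card :=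
          Finset.card_lt_card ⟨hT2sub i, fun hsub => hGnew (hsub hmemnew)⟩
        have hcard1 : (T1 i).card ≤ (T1 (i+1)).card := Finset.card_le_card (hT1sub i)
        simp only [hφ]
        omega
    have hsum := phi_steps hstep
    have hφ0 : 2 ≤ φ 0 := by
      have h2 : 0 < (T2 0).card :=
        Finset.card_pos.mpr ⟨Gc 0, Finset.mem_image.mpr ⟨0, by simp, rfl⟩⟩
      simp only [hφ]
      omega
    have hT1n : (T1 n).card ≤ a + 1 := by
      apply chain_card_le
      · intro u hu v hv
        obtain ⟨j, hj, hje⟩ := Finset.mem_image.mp (Finset.mem_of_mem_erase hu)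
        obtain ⟨k, hk, hke⟩ := Finset.mem_image.mp (Finset.mem_of_mem_erase hv)
        simp only [Finset.mem_Iic] at hj hk
        subst hje hke
        rcases le_total j k with h | h
        · exact Or.inl (hFmono j k h hk)
        · exact Or.inr (hFmono k j h hj)
      · intro u hu
        rw [subsemigroup_nonempty_iff]
        exact Finset.ne_of_mem_erase hu
    have hT2n : (T2 n).card ≤ b + 1 := by
      apply chain_card_le
      · intro u hu v hv
        obtain ⟨j, hj, hje⟩ := Finset.mem_image.mp hu
        obtain ⟨k, hk, hke⟩ := Finset.mem_image.mp hv
        simp only [Finset.mem_Iic] at hj hk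
        subst hje hke
        rcases le_total j k with h | h
        · exact Or.inl (hGmono j k h hk)
        · exact Or.inr (hGmono k j h hj)
      · intro u hu
        obtain ⟨j, hj, hje⟩ := Finset.mem_image.mp hu
        simp only [Finset.mem_Iic] at hj
        subst hje
        obtain ⟨y, hy⟩ := hfSne j hj
        by_cases hyI : y ∈ I
        · exact ⟨rq0, rq0_mem_Gsg_iff.mpr ⟨y, hyI, hy⟩⟩
        · exact ⟨rqs ⟨y, hyI⟩, rqs_mem_Gsg_iff.mpr hy⟩
    have hφn : φ n ≤ (a + 1) + (b + 1) := by
      simp only [hφ]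
      have : max (T1 n).card 1 ≤ a + 1 := max_le hT1n (by omega)
      omega
    omega
  omega
end

section
/- Let S be a semigroup generated by a single element s, and let m and n be the least positive integers such that s^{m+n} = s^m. Then l(S) = m + Ω(n) − 1, where Ω(n) is the number of prime divisors of n counted with multiplicity. -/
/-- Positive powers in a semigroup: `spow s k = s ^ k` for `k ≥ 1` (and, by convention,
`spow s 0 = s`; only positive exponents are ever used below). -/
def spow {S : Type*} [Semigroup S] (s : S) : ℕ → S
  | 0 => s
  | 1 => s
  | (n + 2) => spow s (n + 1) * s

section
variable {S : Type*} [Semigroup S] (s : S)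

lemma spow_coe : ∀ k : ℕ, 0 < k → ((spow s k : S) : WithOne S) = (s : WithOne S) ^ k
  | 1, _ => by simp [spow]
  | (k+2), _ => by
      rw [spow, WithOne.coe_mul, spow_coe (k+1) (Nat.succ_pos _), pow_succ, pow_succ, pow_succ]

lemma spow_add {a b : ℕ} (ha : 0 < a) (hb : 0 < b) :
    spow s (a + b) = spow s a * spow s b := by
  apply WithOne.coe_inj.mp
  rw [WithOne.coe_mul, spow_coe s _ (by omega), spow_coe s a ha, spow_coe s b hb, pow_add]

lemma spow_inj_iff {a b : ℕ} (ha : 0 < a) (hb : 0 < b) :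
    spow s a = spow s b ↔ (s : WithOne S) ^ a = (s : WithOne S) ^ b := by
  rw [← spow_coe s a ha, ← spow_coe s b hb, WithOne.coe_inj]

/-- powers of a member of a subsemigroup stay in it -/
lemma spow_mul_mem {A : Subsemigroup S} {k : ℕ} (hk : 0 < k) (h : spow s k ∈ A) :
    ∀ j : ℕ, 0 < j → spow s (j * k) ∈ A := by
  intro j hj
  induction j with
  | zero => omega
  | succ j ih =>
      rcases Nat.eq_zero_or_pos j with hj0 | hj0
      · subst hj0; simpa using h
      · have : (j + 1) * k = j * k + k := by ring
        rw [this, spow_add s (by positivity) hk]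
        exact A.mul_mem (ih hj0) h

variable {m n : ℕ} (hm : 0 < m) (hn : 0 < n) (heq : spow s (m + n) = spow s m)

section
include hm hn heq

lemma tper (c : ℕ) : ∀ q : ℕ, m ≤ q → (s : WithOne S) ^ (q + c * n) = (s : WithOne S) ^ q := by
  induction c with
  | zero => simp
  | succ c ih =>
      intro q hq
      have ht : (s : WithOne S) ^ (m + n) = (s : WithOne S) ^ m :=
        (spow_inj_iff s (by omega) hm).mp heq
      have h1 : (s : WithOne S) ^ (q + n) = (s : WithOne S) ^ q := by
        have : q + n = (q - m) + (m + n) := by omega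
        rw [this, pow_add, ht, ← pow_add, Nat.sub_add_cancel hq]
      have : q + (c+1) * n = (q + n) + c * n := by ring
      rw [this, ih (q + n) (by omega), h1]

lemma tmod {a b : ℕ} (ha : m ≤ a) (hb : m ≤ b) (hab : a % n = b % n) :
    (s : WithOne S) ^ a = (s : WithOne S) ^ b := by
  rcases le_total a b with h | h
  · have hd : n ∣ b - a := (Nat.modEq_iff_dvd' h).mp hab
    obtain ⟨c, hc⟩ := hd
    have : b = a + c * n := by rw [mul_comm]; omega
    rw [this, tper s hm hn heq c a ha]
  · have hd : n ∣ a - b := (Nat.modEq_iff_dvd' h).mp hab.symm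
    obtain ⟨c, hc⟩ := hd
    have : a = b + c * n := by rw [mul_comm]; omega
    rw [this, tper s hm hn heq c b hb]

lemma spow_mod {a b : ℕ} (ha : m ≤ a) (hb : m ≤ b) (hab : a % n = b % n) :
    spow s a = spow s b :=
  (spow_inj_iff s (by omega) (by omega)).mpr (tmod s hm hn heq ha hb hab)

lemma spow_cast {a b : ℕ} (ha : m ≤ a) (hb : m ≤ b) (h : (a : ZMod n) = (b : ZMod n)) :
    spow s a = spow s b :=
  spow_mod s hm hn heq ha hb ((ZMod.natCast_eq_natCast_iff' a b n).mp h)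

end

section
include hm hn heq
variable (hm_min : ∀ m' : ℕ, 0 < m' → (∃ n' : ℕ, 0 < n' ∧ spow s (m' + n') = spow s m') → m ≤ m')
  (hn_min : ∀ n' : ℕ, 0 < n' → spow s (m + n') = spow s m → n ≤ n')
include hm_min hn_min

lemma keyEq_aux {a b : ℕ} (ha : 0 < a) (hab : a < b) (h : spow s a = spow s b) :
    m ≤ a ∧ m ≤ b ∧ a % n = b % n := by
  set t : WithOne S := (s : WithOne S) with htdef
  have ht : t ^ a = t ^ b := (spow_inj_iff s ha (by omega)).mp h
  set u := b - a with hu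
  have hu0 : 0 < u := by omega
  have hb' : b = a + u := by omega
  have hma : m ≤ a := by
    apply hm_min a ha
    exact ⟨u, hu0, by rw [← hb']; exact h.symm⟩
  have hshift : ∀ q : ℕ, a ≤ q → t ^ (q + u) = t ^ q := by
    intro q hq
    have h1 : q + u = (q - a) + (a + u) := by omega
    rw [h1, pow_add, ← hb', ← ht, ← pow_add, Nat.sub_add_cancel hq]
  have hq1 : t ^ (m + a * n + u) = t ^ (m + a * n) := hshift (m + a * n) (by nlinarith)
  have hq2 : t ^ (m + a * n) = t ^ m := by
    have := tper s hm hn heq a m le_rfl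
    simpa using this
  have hq3 : t ^ (m + a * n + u) = t ^ (m + u) := by
    have := tper s hm hn heq a (m + u) (by omega)
    have h1 : m + a * n + u = m + u + a * n := by ring
    rw [h1, this]
  have hmu : t ^ (m + u) = t ^ m := by rw [← hq3, hq1, hq2]
  have hr : u % n = 0 := by
    by_contra hr0
    have hrpos : 0 < u % n := Nat.pos_of_ne_zero hr0
    have hmr : t ^ (m + u % n) = t ^ m := by
      rw [← hmu]
      apply tmod s hm hn heq (by omega) (by omega)
      conv_lhs => rw [Nat.add_mod]
      conv_rhs => rw [Nat.add_mod, ← Nat.mod_mod_of_dvd u (dvd_refl n)]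
    have : spow s (m + u % n) = spow s m :=
      (spow_inj_iff s (by omega) hm).mpr hmr
    have := hn_min (u % n) hrpos this
    have := Nat.mod_lt u hn
    omega
  refine ⟨hma, by omega, ?_⟩
  obtain ⟨c, hc⟩ := Nat.dvd_of_mod_eq_zero hr
  have hb2 : b = a + n * c := by omega
  rw [hb2, Nat.add_mul_mod_self_left]

lemma keyEq {a b : ℕ} (ha : 0 < a) (hb : 0 < b) (h : spow s a = spow s b) :
    a = b ∨ (m ≤ a ∧ m ≤ b ∧ a % n = b % n) := by
  rcases lt_trichotomy a b with hab | hab | hab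
  · exact Or.inr (keyEq_aux s hm hn heq hm_min hn_min ha hab h)
  · exact Or.inl hab
  · obtain ⟨h1, h2, h3⟩ := keyEq_aux s hm hn heq hm_min hn_min hb hab h.symm
    exact Or.inr ⟨h2, h1, h3.symm⟩

end
end
section rankstuff
open Classical in
noncomputable def Elow {S : Type*} [Semigroup S] (s : S) (m : ℕ) (A : Subsemigroup S) :
    Finset ℕ :=
  (Finset.Ico 1 m).filter fun k => spow s k ∈ A

def srep (m n : ℕ) (z : ZMod n) : ℕ := m * n + z.val

open Classical in
noncomputable def Dset {S : Type*} [Semigroup S] (s : S) (m n : ℕ) [NeZero n]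
    (A : Subsemigroup S) : Finset (ZMod n) :=
  Finset.univ.filter fun z => spow s (srep m n z) ∈ A

variable {S : Type*} [Semigroup S] (s : S) {m n : ℕ} [NeZero n]

lemma mem_Elow {A : Subsemigroup S} {k : ℕ} :
    k ∈ Elow s m A ↔ 1 ≤ k ∧ k < m ∧ spow s k ∈ A := by
  simp [Elow, Finset.mem_filter, Finset.mem_Ico, and_assoc]

lemma mem_Dset {A : Subsemigroup S} {z : ZMod n} :
    z ∈ Dset s m n A ↔ spow s (srep m n z) ∈ A := by
  simp [Dset, Finset.mem_filter]

lemma srep_ge (z : ZMod n) (hn : 0 < n) : m ≤ srep m n z :=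
  le_trans (Nat.le_mul_of_pos_right m hn) (Nat.le_add_right _ _)

lemma srep_cast (z : ZMod n) : ((srep m n z : ℕ) : ZMod n) = z := by
  have : ((z.val : ℕ) : ZMod n) = z := ZMod.natCast_rightInverse z
  simp [srep, this]

variable (hm : 0 < m) (hn : 0 < n) (heq : spow s (m + n) = spow s m)
include hm hn heq

lemma mem_Dset_of_spow {A : Subsemigroup S} {k : ℕ} (hk : m ≤ k) (h : spow s k ∈ A) :
    (k : ZMod n) ∈ Dset s m n A := by
  rw [mem_Dset]
  have : spow s (srep m n (k : ZMod n)) = spow s k :=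
    spow_cast s hm hn heq (srep_ge _ hn) hk (srep_cast _)
  rw [this]; exact h

lemma exists_DG (hgen : ∀ x : S, ∃ k : ℕ, 0 < k ∧ x = spow s k)
    {A : Subsemigroup S} (hA : (A : Set S).Nonempty) :
    ∃ G : AddSubgroup (ZMod n), (G : Set (ZMod n)) = ↑(Dset s m n A) := by
  refine ⟨{ carrier := ↑(Dset s m n A), add_mem' := ?_, zero_mem' := ?_, neg_mem' := ?_ }, rfl⟩
  · rintro z1 z2 h1 h2
    simp only [Finset.coe_filter, Set.mem_setOf_eq, Finset.mem_coe, mem_Dset] at h1 h2 ⊢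
    have hmem : spow s (srep m n z1 + srep m n z2) ∈ A := by
      rw [spow_add s (by have := srep_ge (m := m) z1 hn; omega)
        (by have := srep_ge (m := m) z2 hn; omega)]
      exact A.mul_mem h1 h2
    have : spow s (srep m n (z1 + z2)) = spow s (srep m n z1 + srep m n z2) := by
      apply spow_cast s hm hn heq (srep_ge _ hn)
        (by have := srep_ge (m := m) z1 hn; omega)
      push_cast [srep_cast]
      ring
    rw [this]; exact hmem
  · obtain ⟨x, hx⟩ := hA
    obtain ⟨k, hk, rfl⟩ := hgen x
    simp only [Finset.coe_filter, Set.mem_setOf_eq, Finset.mem_coe, mem_Dset] at hx ⊢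
    have hmem : spow s ((n * m) * k) ∈ A := spow_mul_mem s hk hx (n * m) (by positivity)
    have : spow s (srep m n 0) = spow s ((n * m) * k) := by
      apply spow_cast s hm hn heq (srep_ge _ hn)
        (by have h1 : m ≤ n * m := Nat.le_mul_of_pos_left m hn
            have h2 : n * m ≤ n * m * k := Nat.le_mul_of_pos_right _ hk
            omega)
      push_cast [srep_cast]
      simp
    rw [this]; exact hmem
  · intro z hz
    simp only [Finset.coe_filter, Set.mem_setOf_eq, Finset.mem_coe, mem_Dset] at hz ⊢
    rcases Nat.lt_or_ge n 2 with h2 | h2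
    · have hn1 : n = 1 := by omega
      subst hn1
      have : -z = z := by
        have : Subsingleton (ZMod 1) := by infer_instance
        exact Subsingleton.elim _ _
      rw [this]; exact hz
    · have hmem : spow s ((n - 1) * srep m n z) ∈ A :=
        spow_mul_mem s (by have := srep_ge (m := m) z hn; omega) hz (n - 1) (by omega)
      have : spow s (srep m n (-z)) = spow s ((n - 1) * srep m n z) := by
        apply spow_cast s hm hn heq (srep_ge _ hn)
          (by have h1 := srep_ge (m := m) z hn
              have h2 : srep m n z ≤ (n - 1) * srep m n z :=
                Nat.le_mul_of_pos_left _ (by omega)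
              omega)
        push_cast [srep_cast, Nat.cast_sub (by omega : 1 ≤ n)]
        simp [sub_mul, ZMod.natCast_self]
      rw [this]; exact hmem
end rankstuff
section cards

lemma omegaN_mul {a b : ℕ} (ha : a ≠ 0) (hb : b ≠ 0) :
    (a * b).primeFactorsList.length
      = a.primeFactorsList.length + b.primeFactorsList.length := by
  have := ArithmeticFunction.cardFactors_mul ha hb
  simpa [ArithmeticFunction.cardFactors_apply] using this

lemma omegaN_le_of_dvd {a b : ℕ} (h : a ∣ b) (hb : b ≠ 0) :
    a.primeFactorsList.length ≤ b.primeFactorsList.length := by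
  obtain ⟨c, rfl⟩ := h
  have ha : a ≠ 0 := by rintro rfl; simp at hb
  have hc : c ≠ 0 := by rintro rfl; simp at hb
  rw [omegaN_mul ha hc]; omega

lemma eq_of_dvd_of_omegaN_eq {a b : ℕ} (h : a ∣ b) (hb : b ≠ 0)
    (hl : a.primeFactorsList.length = b.primeFactorsList.length) : a = b := by
  obtain ⟨c, rfl⟩ := h
  have ha : a ≠ 0 := by rintro rfl; simp at hb
  have hc : c ≠ 0 := by rintro rfl; simp at hb
  rw [omegaN_mul ha hc] at hl
  have : c.primeFactorsList.length = 0 := by omega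
  have hc1 : c = 1 := by
    rcases (Nat.primeFactorsList_eq_nil c).mp (List.length_eq_zero_iff.mp this) with h | h
    · exact absurd h hc
    · exact h
  simp [hc1]

variable {S : Type*} [Semigroup S] (s : S) {m n : ℕ} [NeZero n]
variable (hm : 0 < m) (hn : 0 < n) (heq : spow s (m + n) = spow s m)
  (hgen : ∀ x : S, ∃ k : ℕ, 0 < k ∧ x = spow s k)
include hm hn heq hgen

lemma Dset_card_dvd {A : Subsemigroup S} (hA : (A : Set S).Nonempty) :
    (Dset s m n A).card ∣ n := by
  obtain ⟨G, hG⟩ := exists_DG s hm hn heq hgen hA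
  have h1 : Nat.card G ∣ Nat.card (ZMod n) := AddSubgroup.card_addSubgroup_dvd_card G
  rw [Nat.card_zmod] at h1
  have h2 : Nat.card G = (Dset s m n A).card := by
    rw [← SetLike.coe_sort_coe, Nat.card_coe_set_eq, hG, Set.ncard_coe_finset]
  rwa [h2] at h1

lemma Dset_card_dvd_of_le {A B : Subsemigroup S} (hA : (A : Set S).Nonempty)
    (hB : (B : Set S).Nonempty) (hAB : A ≤ B) :
    (Dset s m n A).card ∣ (Dset s m n B).card := by
  obtain ⟨G, hG⟩ := exists_DG s hm hn heq hgen hA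
  obtain ⟨H, hH⟩ := exists_DG s hm hn heq hgen hB
  have hsub : Dset s m n A ⊆ Dset s m n B := by
    intro z hz
    rw [mem_Dset] at hz ⊢
    exact hAB hz
  have hle : G ≤ H := by
    intro z hz
    have : z ∈ (G : Set (ZMod n)) := hz
    rw [hG] at this
    have : z ∈ (H : Set (ZMod n)) := by rw [hH]; exact hsub this
    exact this
  have := AddSubgroup.card_dvd_of_le hle
  rwa [← SetLike.coe_sort_coe G, ← SetLike.coe_sort_coe H,
    Nat.card_coe_set_eq, hG, Set.ncard_coe_finset,
    Nat.card_coe_set_eq, hH, Set.ncard_coe_finset] at this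

lemma sub_eq_of_ED_eq {A B : Subsemigroup S} (hAB : A ≤ B)
    (hE : Elow s m A = Elow s m B) (hD : Dset s m n A = Dset s m n B) : A = B := by
  apply le_antisymm hAB
  intro x hx
  obtain ⟨k, hk, rfl⟩ := hgen x
  rcases Nat.lt_or_ge k m with hkm | hkm
  · have : k ∈ Elow s m B := (mem_Elow s).mpr ⟨hk, hkm, hx⟩
    rw [← hE] at this
    exact ((mem_Elow s).mp this).2.2
  · have h1 : (k : ZMod n) ∈ Dset s m n B := mem_Dset_of_spow s hm hn heq hkm hx
    rw [← hD] at h1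
    have h2 : spow s (srep m n (k : ZMod n)) ∈ A := (mem_Dset s).mp h1
    have h3 : spow s (srep m n (k : ZMod n)) = spow s k :=
      spow_cast s hm hn heq (srep_ge _ hn) hkm (srep_cast _)
    rwa [h3] at h2

end cards

section rank

noncomputable def rankSg {S : Type*} [Semigroup S] (s : S) (m n : ℕ) [NeZero n]
    (A : Subsemigroup S) : ℕ :=
  (Elow s m A).card + (Dset s m n A).card.primeFactorsList.length

variable {S : Type*} [Semigroup S] (s : S) {m n : ℕ} [NeZero n]
variable (hm : 0 < m) (hn : 0 < n) (heq : spow s (m + n) = spow s m)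
  (hgen : ∀ x : S, ∃ k : ℕ, 0 < k ∧ x = spow s k)
include hm hn heq hgen

lemma rankSg_le {A : Subsemigroup S} (hA : (A : Set S).Nonempty) :
    rankSg s m n A ≤ (m - 1) + n.primeFactorsList.length := by
  have h1 : (Elow s m A).card ≤ m - 1 := by
    have : (Elow s m A).card ≤ (Finset.Ico 1 m).card := by
      apply Finset.card_le_card
      intro k hk
      obtain ⟨h1, h2, _⟩ := (mem_Elow s).mp hk
      exact Finset.mem_Ico.mpr ⟨h1, h2⟩
    simpa [Nat.card_Ico] using this
  have h2 : (Dset s m n A).card.primeFactorsList.length ≤ n.primeFactorsList.length :=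
    omegaN_le_of_dvd (Dset_card_dvd s hm hn heq hgen hA) hn.ne'
  unfold rankSg; omega

lemma rankSg_strictMono {A B : Subsemigroup S} (hA : (A : Set S).Nonempty) (hAB : A < B) :
    rankSg s m n A < rankSg s m n B := by
  have hAB' : A ≤ B := le_of_lt hAB
  have hB : (B : Set S).Nonempty := hA.mono hAB'
  have hE : Elow s m A ⊆ Elow s m B := by
    intro k hk
    rw [mem_Elow] at hk ⊢
    exact ⟨hk.1, hk.2.1, hAB' hk.2.2⟩
  have h1 : (Elow s m A).card ≤ (Elow s m B).card := Finset.card_le_card hE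
  have hDdvd := Dset_card_dvd_of_le s hm hn heq hgen hA hB hAB'
  have hDB0 : (Dset s m n B).card ≠ 0 := by
    obtain ⟨G, hG⟩ := exists_DG s hm hn heq hgen hB
    have : (0 : ZMod n) ∈ Dset s m n B := by
      have : (0 : ZMod n) ∈ (G : Set (ZMod n)) := G.zero_mem
      rw [hG] at this; exact this
    exact Finset.card_ne_zero_of_mem this
  have h2 : (Dset s m n A).card.primeFactorsList.length
      ≤ (Dset s m n B).card.primeFactorsList.length :=
    omegaN_le_of_dvd hDdvd hDB0
  rcases lt_or_eq_of_le h1 with h | hEcard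
  · unfold rankSg; omega
  rcases lt_or_eq_of_le h2 with h | hOm
  · unfold rankSg; omega
  exfalso
  have hEeq : Elow s m A = Elow s m B := Finset.eq_of_subset_of_card_le hE (le_of_eq hEcard.symm)
  have hDcard : (Dset s m n A).card = (Dset s m n B).card :=
    eq_of_dvd_of_omegaN_eq hDdvd hDB0 hOm
  have hDsub : Dset s m n A ⊆ Dset s m n B := by
    intro z hz
    rw [mem_Dset] at hz ⊢
    exact hAB' hz
  have hDeq : Dset s m n A = Dset s m n B :=
    Finset.eq_of_subset_of_card_le hDsub (le_of_eq hDcard.symm)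
  exact ne_of_lt hAB (sub_eq_of_ED_eq s hm hn heq hgen hAB' hEeq hDeq)

end rank
section lower

def Bsg {S : Type*} [Semigroup S] (s : S) (m n : ℕ) (i : ℕ) : Subsemigroup S where
  carrier := {x | ∃ k, max 1 (m + n.primeFactorsList.length - i) ≤ k ∧
      (n.primeFactorsList.drop i).prod ∣ k ∧ x = spow s k}
  mul_mem' := by
    rintro x y ⟨k1, hb1, hd1, rfl⟩ ⟨k2, hb2, hd2, rfl⟩
    have hk1 : 0 < k1 := lt_of_lt_of_le (lt_of_lt_of_le one_pos (le_max_left _ _)) hb1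
    have hk2 : 0 < k2 := lt_of_lt_of_le (lt_of_lt_of_le one_pos (le_max_left _ _)) hb2
    exact ⟨k1 + k2, le_trans hb1 (Nat.le_add_right _ _), dvd_add hd1 hd2,
      (spow_add s hk1 hk2).symm⟩

variable {S : Type*} [Semigroup S] (s : S) {m n : ℕ}

lemma mem_Bsg {i : ℕ} {x : S} :
    x ∈ Bsg s m n i ↔ ∃ k, max 1 (m + n.primeFactorsList.length - i) ≤ k ∧
      (n.primeFactorsList.drop i).prod ∣ k ∧ x = spow s k := Iff.rfl

lemma dropProd_pos (n i : ℕ) : 0 < (n.primeFactorsList.drop i).prod := by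
  apply List.prod_pos
  intro a ha
  exact Nat.pos_of_mem_primeFactorsList (List.mem_of_mem_drop ha)

lemma dropProd_dvd (hn : 0 < n) (i : ℕ) : (n.primeFactorsList.drop i).prod ∣ n := by
  conv_rhs => rw [← Nat.prod_primeFactorsList hn.ne']
  conv_rhs => rw [← List.take_append_drop i n.primeFactorsList]
  rw [List.prod_append]
  exact dvd_mul_left _ _

lemma Bsg_nonempty (i : ℕ) : ((Bsg s m n i : Set S)).Nonempty := by
  set d := (n.primeFactorsList.drop i).prod with hd
  have hdpos : 0 < d := dropProd_pos n i
  set W := n.primeFactorsList.length with hW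
  refine ⟨spow s (d * (m + W + 1)), ⟨d * (m + W + 1), ?_, Dvd.intro _ rfl, rfl⟩⟩
  have h1 : m + W + 1 ≤ d * (m + W + 1) := Nat.le_mul_of_pos_left _ hdpos
  apply max_le <;> omega

lemma Bsg_mono_succ (i : ℕ) : Bsg s m n i ≤ Bsg s m n (i + 1) := by
  rintro x ⟨k, hb, hd, rfl⟩
  refine ⟨k, le_trans (max_le_max le_rfl (by omega)) hb, ?_, rfl⟩
  refine dvd_trans ?_ hd
  rcases Nat.lt_or_ge i n.primeFactorsList.length with hi | hi
  · rw [List.drop_eq_getElem_cons hi, List.prod_cons]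
    exact dvd_mul_left _ _
  · rw [List.drop_eq_nil_of_le hi, List.drop_eq_nil_of_le (by omega)]

lemma Bsg_mono {i j : ℕ} (hij : i ≤ j) : Bsg s m n i ≤ Bsg s m n j := by
  induction j with
  | zero => simpa [Nat.le_zero.mp hij]
  | succ j ih =>
      rcases Nat.lt_or_ge i (j+1) with h | h
      · exact le_trans (ih (by omega)) (Bsg_mono_succ s j)
      · have : i = j + 1 := by omega
        subst this; exact le_rfl

variable (hm : 0 < m) (hn : 0 < n) (heq : spow s (m + n) = spow s m)
  (hm_min : ∀ m' : ℕ, 0 < m' → (∃ n' : ℕ, 0 < n' ∧ spow s (m' + n') = spow s m') → m ≤ m')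
  (hn_min : ∀ n' : ℕ, 0 < n' → spow s (m + n') = spow s m → n ≤ n')
include hm hn heq hm_min hn_min

lemma Bsg_strict_succ {i : ℕ} (hi : i + 1 ≤ m + n.primeFactorsList.length - 1) :
    Bsg s m n i < Bsg s m n (i + 1) := by
  set W := n.primeFactorsList.length with hW
  rw [lt_iff_le_and_ne]
  refine ⟨Bsg_mono_succ s i, ?_⟩
  intro hcontra
  rcases Nat.lt_or_ge i W with hiW | hiW
  · -- prime step
    set p := n.primeFactorsList[i]'hiW with hp
    have hpp : p.Prime := Nat.prime_of_mem_primeFactorsList (List.getElem_mem hiW)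
    set d1 := (n.primeFactorsList.drop (i+1)).prod with hd1
    have hd1pos : 0 < d1 := dropProd_pos n (i+1)
    have hd0 : (n.primeFactorsList.drop i).prod = p * d1 := by
      rw [List.drop_eq_getElem_cons hiW, List.prod_cons]
    set t := p * (m + W) + 1 with ht
    set k := d1 * t with hk
    have htge : m + W ≤ t := by
      have : m + W ≤ p * (m + W) := Nat.le_mul_of_pos_left _ hpp.pos
      omega
    have hkt : t ≤ k := Nat.le_mul_of_pos_left _ hd1pos
    have hxmem : spow s k ∈ Bsg s m n (i + 1) := by
      refine ⟨k, ?_, Dvd.intro _ rfl, rfl⟩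
      apply max_le <;> omega
    rw [← hcontra] at hxmem
    obtain ⟨k', hb', hd', hx⟩ := hxmem
    have hk'pos : 0 < k' := lt_of_lt_of_le (lt_of_lt_of_le one_pos (le_max_left _ _)) hb'
    have hkpos : 0 < k := by omega
    have hdvdk : (n.primeFactorsList.drop i).prod ∣ k := by
      rcases keyEq s hm hn heq hm_min hn_min hk'pos hkpos hx.symm with h | ⟨h1, h2, h3⟩
      · rw [← h]; exact hd'
      · have hdn : (n.primeFactorsList.drop i).prod ∣ n := dropProd_dvd hn i
        have hmod : k' ≡ k [MOD (n.primeFactorsList.drop i).prod] :=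
          Nat.ModEq.of_dvd hdn h3
        exact Nat.modEq_zero_iff_dvd.mp
          (hmod.symm.trans (Nat.modEq_zero_iff_dvd.mpr hd'))
    rw [hd0, hk] at hdvdk
    have hpt : p ∣ t := by
      have : d1 * p ∣ d1 * t := by rwa [mul_comm d1 p]
      exact (Nat.mul_dvd_mul_iff_left hd1pos).mp this
    have hp1 : p ∣ 1 := (Nat.dvd_add_right (dvd_mul_right p (m + W))).mp hpt
    have := hpp.two_le
    have := Nat.le_of_dvd one_pos hp1
    omega
  · -- index step
    set j := m + W - i - 1 with hj
    have hj1 : 1 ≤ j := by omega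
    have hjm : j < m := by omega
    have hxmem : spow s j ∈ Bsg s m n (i + 1) := by
      refine ⟨j, max_le hj1 (by omega), ?_, rfl⟩
      rw [List.drop_eq_nil_of_le (by omega)]
      exact one_dvd _
    rw [← hcontra] at hxmem
    obtain ⟨k', hb', _, hx⟩ := hxmem
    have hk'ge : m + W - i ≤ k' := le_trans (le_max_right _ _) hb'
    rcases keyEq s hm hn heq hm_min hn_min hj1 (by omega) hx with h | ⟨h1, _, _⟩ <;> omega
end lower

/-- Let `S` be a semigroup generated by a single element `s`, and let `m` and `n` be the
least positive integers such that `s ^ (m + n) = s ^ m`.  Then `l(S) = m + Ω(n) − 1`,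
where `Ω(n)` is the number of prime divisors of `n` counted with multiplicity. -/
theorem semigroupLength_monogenic (S : Type*) [Semigroup S] (s : S)
    (hgen : ∀ x : S, ∃ k : ℕ, 0 < k ∧ x = spow s k)
    (m n : ℕ) (hm : 0 < m) (hn : 0 < n)
    (heq : spow s (m + n) = spow s m)
    (hm_min : ∀ m' : ℕ, 0 < m' → (∃ n' : ℕ, 0 < n' ∧ spow s (m' + n') = spow s m') → m ≤ m')
    (hn_min : ∀ n' : ℕ, 0 < n' → spow s (m + n') = spow s m → n ≤ n') :
    semigroupLength S = m + n.primeFactorsList.length - 1 := by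
  classical
  haveI : NeZero n := ⟨hn.ne'⟩
  have hKset : IsGreatest {k : ℕ | ∃ c : Fin (k + 1) → Subsemigroup S,
      StrictMono c ∧ ∀ i, ((c i : Set S)).Nonempty} (m - 1 + n.primeFactorsList.length) := by
    constructor
    · refine ⟨fun i => Bsg s m n i.val, ?_, fun i => Bsg_nonempty s i.val⟩
      intro i j hij
      have hij' : (i : ℕ) < (j : ℕ) := hij
      have hjK : (j : ℕ) ≤ m - 1 + n.primeFactorsList.length := by
        have := j.isLt; omega
      calc Bsg s m n i.val < Bsg s m n (i.val + 1) :=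
            Bsg_strict_succ s hm hn heq hm_min hn_min (by omega)
        _ ≤ Bsg s m n j.val := Bsg_mono s (by omega)
    · rintro k ⟨c, hc, hne⟩
      have hstep : ∀ j : ℕ, (hj : j < k + 1) → j ≤ rankSg s m n (c ⟨j, hj⟩) := by
        intro j
        induction j with
        | zero => intro hj; exact Nat.zero_le _
        | succ j ih =>
            intro hj
            have h1 := ih (by omega)
            have h2 : rankSg s m n (c ⟨j, by omega⟩) < rankSg s m n (c ⟨j + 1, hj⟩) :=
              rankSg_strictMono s hm hn heq hgen (hne _)
                (hc (Fin.mk_lt_mk.mpr (by omega)))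
            omega
      have h3 := hstep k (by omega)
      have h4 := rankSg_le s hm hn heq hgen (hne (⟨k, by omega⟩ : Fin (k + 1)))
      omega
  unfold semigroupLength
  rw [hKset.csSup_eq]
  omega
end

section
/- There exists a function f : ℕ → ℝ with f(n)/n^{n−1/3} → 0 as n → ∞, such that for all n the length of the full transformation semigroup T_n satisfies l(T_n) ≥ e^{−2} n^n − 2e^{−2}(1 − e^{−1}) n^{n−1/3} − f(n). -/
open Real Filter

set_option linter.unusedSectionVars false
set_option maxHeartbeats 1000000

namespace SLaux


instance (n : ℕ) : Fintype (Function.End (Fin n)) := inferInstanceAs (Fintype (Fin n → Fin n))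
instance (n : ℕ) : DecidableEq (Function.End (Fin n)) := inferInstanceAs (DecidableEq (Fin n → Fin n))

variable {n : ℕ} [NeZero n]

def rnk (x : Function.End (Fin n)) : ℕ := (Finset.univ.image (x : Fin n → Fin n)).card

lemma rnk_mul_le_left (x y : Function.End (Fin n)) : rnk (x * y) ≤ rnk x := by
  apply Finset.card_le_card
  intro a ha
  obtain ⟨i, -, hi⟩ := Finset.mem_image.mp ha
  exact Finset.mem_image.mpr ⟨y i, Finset.mem_univ _, hi⟩

lemma image_mul (x y : Function.End (Fin n)) :
    Finset.univ.image ((x * y : Function.End (Fin n)) : Fin n → Fin n)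
      = (Finset.univ.image (y : Fin n → Fin n)).image (x : Fin n → Fin n) := by
  exact (Finset.image_image).symm

lemma rnk_mul_le_right (x y : Function.End (Fin n)) : rnk (x * y) ≤ rnk y := by
  rw [rnk, image_mul]; exact Finset.card_image_le

def P (x : Function.End (Fin n)) : Prop :=
  (∀ i, x i ≠ 0) ∧ (∀ i, i ≠ 0 → x i ≠ x 0)

noncomputable def A : Finset (Function.End (Fin n)) :=
  @Finset.filter _ P (Classical.decPred P) Finset.univ

lemma mem_A {x : Function.End (Fin n)} : x ∈ (A (n := n)) ↔ P x := by
  classical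
  simp [A]

lemma key_rank_lt {x y : Function.End (Fin n)} (hx : x ∈ (A (n := n))) (hy : y ∈ (A (n := n))) :
    rnk (x * y) < rnk x := by
  rcases lt_or_eq_of_le (rnk_mul_le_left x y) with h | h
  · exact h
  · exfalso
    rw [mem_A] at hx hy
    have hsub : (Finset.univ.image (y : Fin n → Fin n)).image (x : Fin n → Fin n)
        ⊆ Finset.univ.image (x : Fin n → Fin n) := by
      intro a ha
      obtain ⟨q, -, hq⟩ := Finset.mem_image.mp ha
      exact Finset.mem_image.mpr ⟨q, Finset.mem_univ _, hq⟩
    have hcard : (Finset.univ.image (x : Fin n → Fin n)).card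
        ≤ ((Finset.univ.image (y : Fin n → Fin n)).image (x : Fin n → Fin n)).card := by
      rw [← image_mul]; exact h.ge
    have heq := Finset.eq_of_subset_of_card_le hsub hcard
    have hx0 : x 0 ∈ Finset.univ.image (x : Fin n → Fin n) := by
      exact Finset.mem_image.mpr ⟨0, Finset.mem_univ _, rfl⟩
    rw [← heq] at hx0
    obtain ⟨q, hq', hxq⟩ := Finset.mem_image.mp hx0
    obtain ⟨i, -, hi⟩ := Finset.mem_image.mp hq'
    have hq0 : q = 0 := by
      by_contra hne
      exact hx.2 q hne hxq
    exact hy.1 i (by rw [hi, hq0])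

lemma rnk_one : rnk (1 : Function.End (Fin n)) = n := by
  have : Finset.univ.image ((1 : Function.End (Fin n)) : Fin n → Fin n) = Finset.univ := by
    apply Finset.eq_univ_of_forall
    intro i
    exact Finset.mem_image.mpr ⟨i, Finset.mem_univ _, rfl⟩
  rw [rnk, this, Finset.card_univ, Fintype.card_fin]

lemma rnk_lt_of_mem_A {x : Function.End (Fin n)} (hx : x ∈ (A (n := n))) : rnk x < n := by
  rw [mem_A] at hx
  have hne : Finset.univ.image (x : Fin n → Fin n) ≠ Finset.univ := by
    intro h
    have : (0 : Fin n) ∈ Finset.univ.image (x : Fin n → Fin n) := by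
      rw [h]; exact Finset.mem_univ _
    obtain ⟨i, -, hi⟩ := Finset.mem_image.mp this
    exact hx.1 i hi
  have := Finset.card_lt_card (Finset.ssubset_univ_iff.mpr hne)
  rw [Finset.card_univ, Fintype.card_fin] at this; exact this

/-! ### the key / ordering -/

noncomputable def idx (x : Function.End (Fin n)) : ℕ := Fintype.equivFin (Function.End (Fin n)) x

noncomputable def K : ℕ := Fintype.card (Function.End (Fin n)) + 1

lemma idx_lt (x : Function.End (Fin n)) : idx x < (K (n := n)) :=
  Nat.lt_succ_of_le (Nat.le_of_lt_succ (Nat.lt_succ_of_lt ((Fintype.equivFin _ x).isLt)))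

noncomputable def key (x : Function.End (Fin n)) : ℕ := rnk x * (K (n := n)) + idx x

lemma key_inj : Function.Injective (key (n := n)) := by
  intro x y h
  have hx := idx_lt x
  have hy := idx_lt y
  have h2 : idx x = idx y := by
    have hmod : key x % (K (n := n)) = key y % (K (n := n)) := by rw [h]
    rwa [key, key, Nat.mul_comm (rnk x), Nat.mul_comm (rnk y), Nat.mul_add_mod,
      Nat.mul_add_mod, Nat.mod_eq_of_lt hx, Nat.mod_eq_of_lt hy] at hmod
  have := (Fintype.equivFin (Function.End (Fin n))).injective
  apply this
  exact Fin.val_injective h2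

lemma key_lt_of_rnk_lt {x y : Function.End (Fin n)} (h : rnk x < rnk y) : key x < key y := by
  have hx := idx_lt x
  calc key x < rnk x * K + K := by exact Nat.add_lt_add_left hx _
    _ = (rnk x + 1) * K := by ring
    _ ≤ rnk y * K := Nat.mul_le_mul_right _ h
    _ ≤ key y := Nat.le_add_right _ _

lemma rnk_le_of_key_le {x y : Function.End (Fin n)} (h : key x ≤ key y) : rnk x ≤ rnk y := by
  by_contra hc
  exact absurd (key_lt_of_rnk_lt (not_le.mp hc)) (not_lt.mpr h)

/-! ### the subsemigroups -/

noncomputable def S (x : Function.End (Fin n)) : Subsemigroup (Function.End (Fin n)) where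
  carrier := {y | rnk y < rnk x ∨ (rnk y = rnk x ∧ y ∈ (A (n := n)) ∧ key y ≤ key x)}
  mul_mem' := by
    rintro y z (hy | ⟨hy1, hy2, hy3⟩) hz
    · left
      exact lt_of_le_of_lt (rnk_mul_le_left y z) hy
    · rcases hz with hz | ⟨hz1, hz2, hz3⟩
      · left
        exact lt_of_le_of_lt (rnk_mul_le_right y z) hz
      · left
        exact lt_of_lt_of_le (key_rank_lt hy2 hz2) hy1.le

lemma mem_S_iff {x y : Function.End (Fin n)} :
    y ∈ S x ↔ rnk y < rnk x ∨ (rnk y = rnk x ∧ y ∈ (A (n := n)) ∧ key y ≤ key x) := Iff.rfl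

lemma self_mem_S {x : Function.End (Fin n)} (hx : x ∈ (A (n := n))) : x ∈ S x :=
  Or.inr ⟨rfl, hx, le_rfl⟩

lemma S_lt_S {a b : Function.End (Fin n)} (hb : b ∈ (A (n := n))) (hk : key a < key b) :
    S a < S b := by
  rw [SetLike.lt_iff_le_and_exists]
  constructor
  · intro y hy
    have hab : rnk a ≤ rnk b := rnk_le_of_key_le hk.le
    rcases hy with hy | ⟨hy1, hy2, hy3⟩
    · exact Or.inl (lt_of_lt_of_le hy hab)
    · rcases lt_or_eq_of_le hab with h | h
      · exact Or.inl (by rw [hy1]; exact h)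
      · exact Or.inr ⟨hy1.trans h, hy2, hy3.trans hk.le⟩
  · refine ⟨b, self_mem_S hb, ?_⟩
    rintro (h | ⟨h1, h2, h3⟩)
    · exact absurd (key_lt_of_rnk_lt h) (by omega)
    · omega

lemma S_lt_top {a : Function.End (Fin n)} (ha : a ∈ (A (n := n))) :
    S a < ⊤ := by
  rw [lt_top_iff_ne_top]
  intro h
  have h1 : (1 : Function.End (Fin n)) ∈ S a := h ▸ Subsemigroup.mem_top _
  have hn := rnk_lt_of_mem_A ha
  rcases h1 with h1 | ⟨h1, -, -⟩
  · rw [rnk_one] at h1; omega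
  · rw [rnk_one] at h1; omega

/-! ### the chain -/

theorem card_A_mem : (A (n := n)).card ∈
    {k : ℕ | ∃ c : Fin (k + 1) → Subsemigroup (Function.End (Fin n)),
      StrictMono c ∧ ∀ i, ((c i : Set (Function.End (Fin n)))).Nonempty} := by
  classical
  set r : Function.End (Fin n) → Function.End (Fin n) → Prop := fun a b => key a ≤ key b with hr
  haveI : DecidableRel r := fun a b => Nat.decLe _ _
  haveI : IsTrans (Function.End (Fin n)) r := ⟨fun a b c h1 h2 => le_trans h1 h2⟩
  haveI : Std.Antisymm r := ⟨fun a b h1 h2 => key_inj (le_antisymm h1 h2)⟩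
  haveI : Std.Total r := ⟨fun a b => le_total _ _⟩
  set l : List (Function.End (Fin n)) := Finset.sort A r with hl
  have hlen : l.length = (A (n := n)).card := Finset.length_sort r
  have hsort : l.Pairwise r := Finset.pairwise_sort A r
  have hnd : l.Nodup := Finset.sort_nodup A r
  have hmem : ∀ (i : Fin l.length), l.get i ∈ (A (n := n)) := fun i =>
    (Finset.mem_sort r).mp (List.get_mem l i)
  refine ⟨fun i => if h : (i : ℕ) < l.length then S (l.get ⟨i, h⟩) else ⊤, ?_, ?_⟩
  · intro i j hij
    by_cases hj : (j : ℕ) < l.length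
    · have hi : (i : ℕ) < l.length := lt_trans hij hj
      dsimp only
      rw [dif_pos hi, dif_pos hj]
      have hlt : (⟨(i : ℕ), hi⟩ : Fin l.length) < ⟨(j : ℕ), hj⟩ := hij
      have hkey : key (l.get ⟨(i : ℕ), hi⟩) ≤ key (l.get ⟨(j : ℕ), hj⟩) :=
        hsort.rel_get_of_lt hlt
      have hne : l.get ⟨(i : ℕ), hi⟩ ≠ l.get ⟨(j : ℕ), hj⟩ := by
        intro h
        have := (List.nodup_iff_injective_get.mp hnd) h
        simp only [Fin.mk.injEq] at this
        omega
      have hkey' : key (l.get ⟨(i : ℕ), hi⟩) < key (l.get ⟨(j : ℕ), hj⟩) :=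
        lt_of_le_of_ne hkey (fun h => hne (key_inj h))
      exact S_lt_S (hmem _) hkey'
    · have hjN : (j : ℕ) = l.length := by
        have := j.isLt
        rw [hlen] at hj ⊢
        omega
      by_cases hi : (i : ℕ) < l.length
      · dsimp only
        rw [dif_pos hi, dif_neg hj]
        exact S_lt_top (hmem _)
      · exfalso
        have := i.isLt
        have hij' : (i : ℕ) < (j : ℕ) := hij
        rw [hlen] at hi
        omega
  · intro i
    by_cases hi : (i : ℕ) < l.length
    · dsimp only
      rw [dif_pos hi]
      exact ⟨_, self_mem_S (hmem _)⟩
    · dsimp only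
      rw [dif_neg hi]
      exact ⟨1, trivial⟩


/-! ### relating chains to `semigroupLength` -/

lemma bdd (M : Type*) [Mul M] [Finite M] :
    BddAbove {k : ℕ | ∃ c : Fin (k + 1) → Subsemigroup M,
      StrictMono c ∧ ∀ i, ((c i : Set M)).Nonempty} := by
  haveI : Finite (Subsemigroup M) :=
    Finite.of_injective (fun S => (S : Set M)) (fun a b h => SetLike.coe_injective h)
  refine ⟨Nat.card (Subsemigroup M), ?_⟩
  rintro k ⟨c, hc, -⟩
  have h1 : Nat.card (Fin (k + 1)) ≤ Nat.card (Subsemigroup M) :=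
    Nat.card_le_card_of_injective c hc.injective
  simp only [Nat.card_eq_fintype_card, Fintype.card_fin] at h1
  omega

lemma le_semigroupLength {M : Type*} [Mul M] [Finite M] {k : ℕ}
    (h : k ∈ {k : ℕ | ∃ c : Fin (k + 1) → Subsemigroup M,
      StrictMono c ∧ ∀ i, ((c i : Set M)).Nonempty}) :
    k ≤ semigroupLength M :=
  le_csSup (bdd M) h

/-! ### counting A from below -/

def F (m : ℕ) (vg : Fin (m + 2) × (Fin (m + 2) → Fin (m + 1))) :
    Function.End (Fin (m + 3)) :=
  fun i => if h : i = 0 then vg.1.succ else ((vg.1.succAbove (vg.2 (i.pred h))).succ)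

lemma F_prop1 (m : ℕ) (vg) : ∀ i, F m vg i ≠ 0 := by
  intro i
  unfold F
  by_cases h : i = 0
  · rw [dif_pos h]; exact Fin.succ_ne_zero _
  · rw [dif_neg h]; exact Fin.succ_ne_zero _

lemma F_apply_zero (m : ℕ) (vg) : F m vg 0 = vg.1.succ := by
  unfold F; rw [dif_pos rfl]

lemma F_prop2 (m : ℕ) (vg) : ∀ i, i ≠ 0 → F m vg i ≠ F m vg 0 := by
  intro i hi
  rw [F_apply_zero]
  unfold F
  rw [dif_neg hi]
  intro h
  exact Fin.succAbove_ne vg.1 _ (Fin.succ_injective _ h)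

lemma F_inj (m : ℕ) : Function.Injective (F m) := by
  rintro ⟨v, g⟩ ⟨v', g'⟩ heq
  have hv : v = v' := by
    have := congrFun heq 0
    rw [F_apply_zero, F_apply_zero] at this
    exact Fin.succ_injective _ this
  subst hv
  have hg : g = g' := by
    funext j
    have := congrFun heq j.succ
    unfold F at this
    rw [dif_neg (Fin.succ_ne_zero j), dif_neg (Fin.succ_ne_zero j)] at this
    have h2 := Fin.succAbove_right_injective (Fin.succ_injective _ this)
    simpa [Fin.pred_succ] using h2
  rw [hg]

lemma card_A_ge (m : ℕ) : (m+2) * (m+1)^(m+2) ≤ (A (n := m+3)).card := by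
  have h := Finset.card_le_card_of_injOn (s := (Finset.univ : Finset (Fin (m + 2) × (Fin (m + 2) → Fin (m + 1))))) (t := A) (F m)
    (fun a _ => mem_A.mpr ⟨F_prop1 m a, F_prop2 m a⟩) ((F_inj m).injOn)
  calc (m+2) * (m+1)^(m+2)
      = Fintype.card (Fin (m + 2) × (Fin (m + 2) → Fin (m + 1))) := by
        simp [Fintype.card_fun]
    _ ≤ (A (n := m+3)).card := by simpa using h

/-! ### the final chain bound -/

theorem chain_bound (n : ℕ) :
    (n-1) * (n-2)^(n-1) ≤ semigroupLength (Function.End (Fin n)) := by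
  match n with
  | 0 => simp
  | 1 => simp
  | 2 => simp
  | (m+3) =>
    haveI : Finite (Function.End (Fin (m+3))) :=
      Finite.of_fintype (Function.End (Fin (m+3)))
    show (m+2) * (m+1)^(m+2) ≤ _
    calc (m+2) * (m+1)^(m+2) ≤ (A (n := m+3)).card := card_A_ge m
      _ ≤ semigroupLength (Function.End (Fin (m+3))) :=
          le_semigroupLength (card_A_mem (n := m+3))

/-! ### analysis -/


lemma exp_neg_le {a b : ℝ} (h : 1 ≤ b * Real.exp a) : Real.exp (-a) ≤ b := by
  rw [Real.exp_neg]
  nlinarith [Real.exp_pos a, mul_inv_cancel₀ (ne_of_gt (Real.exp_pos a))]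

lemma exp_sub_one_le {x : ℝ} : Real.exp x - 1 ≤ x * Real.exp x := by
  have h := Real.add_one_le_exp (-x)
  have h2 : (1 - x) * Real.exp x ≤ 1 := by
    have := mul_le_mul_of_nonneg_right (by linarith : 1 - x ≤ Real.exp (-x)) (Real.exp_nonneg x)
    rwa [← Real.exp_add, neg_add_cancel, Real.exp_zero] at this
  nlinarith

lemma qbound (u : ℝ) (k : ℕ) (hu4 : 4 ≤ u) (hk : (k:ℝ) = u - 1) :
    |Real.exp (-2) - (1 - 1/u) * (1 - 2/u)^k| ≤ 6/u := by
  have hu0 : (0:ℝ) < u := by linarith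
  have hu1 : (0:ℝ) < u - 1 := by linarith
  have hu2 : (0:ℝ) < u - 2 := by linarith
  have h1u : (0:ℝ) < 1 - 1/u := by rw [sub_pos, div_lt_one hu0]; linarith
  have h2u : (0:ℝ) ≤ 1 - 2/u := by rw [sub_nonneg, div_le_one hu0]; linarith
  have hiu0 : (0:ℝ) ≤ 1/u := by positivity
  have hexp2_le : Real.exp (-2) ≤ 1 := by
    have : Real.exp (-2) ≤ Real.exp 0 := Real.exp_le_exp.mpr (by norm_num)
    rwa [Real.exp_zero] at this
  have hq_ub : (1 - 1/u) * (1 - 2/u)^k ≤ Real.exp (-2) + 6/u := by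
    have ha : 1 - 1/u ≤ Real.exp (-(1/u)) := by
      have := Real.add_one_le_exp (-(1/u)); linarith
    have hb : 1 - 2/u ≤ Real.exp (-(2/u)) := by
      have := Real.add_one_le_exp (-(2/u)); linarith
    have hbp : (1-2/u)^k ≤ Real.exp (-(2/u))^k := pow_le_pow_left₀ h2u hb _
    have hq1 : (1 - 1/u) * (1 - 2/u)^k ≤ Real.exp (-(1/u)) * Real.exp (-(2/u))^k :=
      mul_le_mul ha hbp (pow_nonneg h2u _) (Real.exp_nonneg _)
    have hexp1 : Real.exp (-(1/u)) * Real.exp (-(2/u))^k = Real.exp (-2 + 1/u) := by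
      rw [← Real.exp_nat_mul, ← Real.exp_add]
      congr 1
      rw [hk]
      field_simp
      ring
    have hsplit : Real.exp (-2 + 1/u) = Real.exp (-2) * Real.exp (1/u) := by
      rw [← Real.exp_add]
    have hiu : 1/u ≤ 1 := by rw [div_le_one hu0]; linarith
    have hexp1u : Real.exp (1/u) ≤ Real.exp 1 := Real.exp_le_exp.mpr hiu
    have hexpe : Real.exp 1 ≤ 3 := by
      have := Real.exp_one_lt_d9; linarith
    have hdiff : Real.exp (1/u) - 1 ≤ 3/u := by
      have h3 := exp_sub_one_le (x := 1/u)
      have h4 : (1/u) * Real.exp (1/u) ≤ (1/u) * 3 :=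
        mul_le_mul_of_nonneg_left (hexp1u.trans hexpe) hiu0
      calc Real.exp (1/u) - 1 ≤ (1/u) * Real.exp (1/u) := h3
        _ ≤ (1/u) * 3 := h4
        _ = 3/u := by ring
    have hge1 : (1:ℝ) ≤ Real.exp (1/u) := by
      have := Real.add_one_le_exp (1/u); linarith
    have hfin : Real.exp (-2) * Real.exp (1/u) ≤ Real.exp (-2) + 6/u := by
      nlinarith [mul_nonneg (by linarith : (0:ℝ) ≤ 1 - Real.exp (-2))
        (by linarith : (0:ℝ) ≤ Real.exp (1/u) - 1), hdiff,
        (by positivity : (0:ℝ) ≤ 3/u),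
        (by rw [← add_div]; norm_num : (3:ℝ)/u + 3/u = 6/u)]
    calc (1 - 1/u) * (1 - 2/u)^k ≤ Real.exp (-(1/u)) * Real.exp (-(2/u))^k := hq1
      _ = Real.exp (-2 + 1/u) := hexp1
      _ = Real.exp (-2) * Real.exp (1/u) := hsplit
      _ ≤ Real.exp (-2) + 6/u := hfin
  have hq_lb : Real.exp (-2) - 6/u ≤ (1 - 1/u) * (1 - 2/u)^k := by
    have hid1 : (1 - 1/u) * (1 + 1/(u-1)) = 1 := by field_simp; ring
    have hid2 : (1 - 2/u) * (1 + 2/(u-2)) = 1 := by field_simp; ring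
    have la : Real.exp (-(1/(u-1))) ≤ 1 - 1/u := by
      apply exp_neg_le
      have h' : 1 + 1/(u-1) ≤ Real.exp (1/(u-1)) := by
        have := Real.add_one_le_exp (1/(u-1)); linarith
      calc (1:ℝ) = (1 - 1/u) * (1 + 1/(u-1)) := hid1.symm
        _ ≤ (1 - 1/u) * Real.exp (1/(u-1)) := mul_le_mul_of_nonneg_left h' h1u.le
    have lb : Real.exp (-(2/(u-2))) ≤ 1 - 2/u := by
      apply exp_neg_le
      have h' : 1 + 2/(u-2) ≤ Real.exp (2/(u-2)) := by
        have := Real.add_one_le_exp (2/(u-2)); linarith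
      calc (1:ℝ) = (1 - 2/u) * (1 + 2/(u-2)) := hid2.symm
        _ ≤ (1 - 2/u) * Real.exp (2/(u-2)) := mul_le_mul_of_nonneg_left h' h2u
    have lbp : Real.exp (-(2/(u-2)))^k ≤ (1-2/u)^k :=
      pow_le_pow_left₀ (Real.exp_nonneg _) lb _
    have hq1 : Real.exp (-(1/(u-1))) * Real.exp (-(2/(u-2)))^k ≤ (1 - 1/u) * (1 - 2/u)^k :=
      mul_le_mul la lbp (pow_nonneg (Real.exp_nonneg _) _) h1u.le
    have hexp1 : Real.exp (-(1/(u-1))) * Real.exp (-(2/(u-2)))^k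
        = Real.exp (-(1/(u-1)) + (u-1) * (-(2/(u-2)))) := by
      rw [← Real.exp_nat_mul, ← Real.exp_add, hk]
    have hexpo : -2 - 6/u ≤ -(1/(u-1)) + (u-1) * (-(2/(u-2))) := by
      have d1 : 1/(u-1) ≤ 2/u := by
        rw [div_le_div_iff₀ hu1 hu0]; linarith
      have d3 : 2/(u-2) ≤ 4/u := by
        rw [div_le_div_iff₀ hu2 hu0]; linarith
      have e : (u-1) * (-(2/(u-2))) = -2 - 2/(u-2) := by
        field_simp
        ring
      have hsum : (2:ℝ)/u + 4/u = 6/u := by rw [← add_div]; norm_num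
      linarith [d1, d3, e, hsum]
    have hmono := Real.exp_le_exp.mpr hexpo
    have hsplit : Real.exp (-2 - 6/u) = Real.exp (-2) * Real.exp (-(6/u)) := by
      rw [sub_eq_add_neg, Real.exp_add]
    have hlin : 1 - 6/u ≤ Real.exp (-(6/u)) := by
      have := Real.add_one_le_exp (-(6/u)); linarith
    have hstep : Real.exp (-2) - 6/u ≤ Real.exp (-2) * Real.exp (-(6/u)) := by
      nlinarith [mul_nonneg (Real.exp_nonneg (-2))
          (by linarith : (0:ℝ) ≤ Real.exp (-(6/u)) - (1 - 6/u)),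
        mul_nonneg (by linarith : (0:ℝ) ≤ 1 - Real.exp (-2))
          (by positivity : (0:ℝ) ≤ 6/u)]
    calc Real.exp (-2) - 6/u ≤ Real.exp (-2) * Real.exp (-(6/u)) := hstep
      _ = Real.exp (-2 - 6/u) := hsplit.symm
      _ ≤ Real.exp (-(1/(u-1)) + (u-1) * (-(2/(u-2)))) := hmono
      _ = Real.exp (-(1/(u-1))) * Real.exp (-(2/(u-2)))^k := hexp1.symm
      _ ≤ (1 - 1/u) * (1 - 2/u)^k := hq1
  exact abs_le.mpr ⟨by linarith, by linarith⟩

lemma analysis :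
    Tendsto (fun n : ℕ => (Real.exp (-2) * (n:ℝ)^(n:ℝ) - (((n-1) * (n-2)^(n-1) : ℕ) : ℝ))
      / (n:ℝ)^((n:ℝ) - 1/3)) atTop (nhds 0) := by
  have htend : Tendsto (fun n : ℕ => 6 * ((n:ℝ) ^ (-(2/3) : ℝ))) atTop (nhds 0) := by
    have h1 : Tendsto (fun x : ℝ => x ^ (-(2/3) : ℝ)) atTop (nhds 0) :=
      tendsto_rpow_neg_atTop (by norm_num)
    have h2 := (h1.comp (tendsto_natCast_atTop_atTop (R := ℝ))).const_mul (6:ℝ)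
    simpa using h2
  apply squeeze_zero_norm' _ htend
  filter_upwards [eventually_ge_atTop 4] with n hn
  have hu4 : (4:ℝ) ≤ (n:ℝ) := by exact_mod_cast hn
  have hu0 : (0:ℝ) < (n:ℝ) := by linarith
  have hcast : ((n-1 : ℕ) : ℝ) = (n:ℝ) - 1 := by
    rw [Nat.cast_sub (by omega : 1 ≤ n)]; norm_num
  have hM : (((n-1) * (n-2)^(n-1) : ℕ) : ℝ) = ((n:ℝ) - 1) * ((n:ℝ) - 2)^(n-1) := by
    rw [Nat.cast_mul, Nat.cast_pow, Nat.cast_sub (by omega : 1 ≤ n),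
      Nat.cast_sub (by omega : 2 ≤ n)]
    norm_num
  have hfac : ((n:ℝ) - 1) * ((n:ℝ) - 2)^(n-1)
      = (n:ℝ)^(n:ℕ) * ((1 - 1/(n:ℝ)) * (1 - 2/(n:ℝ))^(n-1)) := by
    have e1 : (n:ℝ) - 1 = (n:ℝ) * (1 - 1/(n:ℝ)) := by field_simp
    have e2 : (n:ℝ) - 2 = (n:ℝ) * (1 - 2/(n:ℝ)) := by field_simp
    obtain ⟨k, hk⟩ : ∃ k, n = k + 1 := ⟨n-1, by omega⟩
    rw [e1, e2, mul_pow, hk]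
    simp only [Nat.add_sub_cancel]
    ring
  have habs := qbound (n:ℝ) (n-1) hu4 hcast
  have hD : (0:ℝ) < (n:ℝ) ^ ((n:ℝ) - 1/3) := Real.rpow_pos_of_pos hu0 _
  rw [Real.norm_eq_abs, abs_div, abs_of_pos hD, div_le_iff₀ hD]
  have hrhs : 6 * (n:ℝ)^(-(2/3) : ℝ) * (n:ℝ) ^ ((n:ℝ) - 1/3) = 6 * ((n:ℝ)^(n:ℕ) / (n:ℝ)) := by
    rw [mul_assoc, ← Real.rpow_add hu0]
    rw [show (-(2/3) : ℝ) + ((n:ℝ) - 1/3) = (n:ℝ) - 1 by ring]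
    rw [Real.rpow_sub hu0, Real.rpow_one, Real.rpow_natCast]
  have hnum : |Real.exp (-2) * (n:ℝ)^((n:ℝ)) - (((n-1) * (n-2)^(n-1) : ℕ) : ℝ)|
      = (n:ℝ)^(n:ℕ) * |Real.exp (-2) - (1 - 1/(n:ℝ)) * (1 - 2/(n:ℝ))^(n-1)| := by
    rw [Real.rpow_natCast, hM, hfac]
    rw [show Real.exp (-2) * (n:ℝ)^(n:ℕ)
        - (n:ℝ)^(n:ℕ) * ((1 - 1/(n:ℝ)) * (1 - 2/(n:ℝ))^(n-1))
        = (n:ℝ)^(n:ℕ) * (Real.exp (-2) - (1 - 1/(n:ℝ)) * (1 - 2/(n:ℝ))^(n-1)) by ring]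
    rw [abs_mul, abs_of_pos (pow_pos hu0 n)]
  rw [hrhs, hnum]
  calc (n:ℝ)^(n:ℕ) * |Real.exp (-2) - (1 - 1/(n:ℝ)) * (1 - 2/(n:ℝ))^(n-1)|
      ≤ (n:ℝ)^(n:ℕ) * (6/(n:ℝ)) :=
        mul_le_mul_of_nonneg_left habs (pow_pos hu0 n).le
    _ = 6 * ((n:ℝ)^(n:ℕ) / (n:ℝ)) := by ring

end SLaux

/-- There is a function `f : ℕ → ℝ` with `f(n)/n^(n−1/3) → 0` as `n → ∞` such that the
length of the full transformation semigroup `T_n` (all maps of an `n`-set to itself,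
under composition) satisfies
`l(T_n) ≥ e⁻² n^n − 2e⁻²(1 − e⁻¹) n^(n−1/3) − f(n)` for all `n`. -/
theorem semigroupLength_fullTransformationSemigroup :
    ∃ f : ℕ → ℝ,
      Tendsto (fun n : ℕ => f n / (n : ℝ) ^ ((n : ℝ) - 1 / 3)) atTop (nhds 0) ∧
      ∀ n : ℕ,
        (semigroupLength (Function.End (Fin n)) : ℝ) ≥
          Real.exp (-2) * (n : ℝ) ^ (n : ℝ) -
            2 * Real.exp (-2) * (1 - Real.exp (-1)) * (n : ℝ) ^ ((n : ℝ) - 1 / 3) - f n := by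
  refine ⟨fun n : ℕ => Real.exp (-2) * (n:ℝ)^(n:ℝ) - (((n-1) * (n-2)^(n-1) : ℕ) : ℝ),
    SLaux.analysis, ?_⟩
  intro n
  have h1 : (((n-1) * (n-2)^(n-1) : ℕ) : ℝ) ≤ (semigroupLength (Function.End (Fin n)) : ℝ) :=
    Nat.cast_le.mpr (SLaux.chain_bound n)
  have hexp1 : Real.exp (-1) ≤ 1 := by
    have : Real.exp (-1) ≤ Real.exp 0 := Real.exp_le_exp.mpr (by norm_num)
    rwa [Real.exp_zero] at this
  have h2 : (0:ℝ) ≤ 2 * Real.exp (-2) * (1 - Real.exp (-1)) * (n:ℝ) ^ ((n:ℝ) - 1/3) := by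
    apply mul_nonneg
    · apply mul_nonneg
      · positivity
      · linarith
    · exact Real.rpow_nonneg (Nat.cast_nonneg n) _
  linarith
end

section
/- For every positive integer n, the length of the full transformation semigroup satisfies l(T_n) ≥ (∑_{k=1}^n F(n,k)·k!) − 1, where F(n,k) is the largest content of a league of rank k on {1,...,n}. -/
/-- `A` is a transversal of the partition `Q` of `{1,…,n}` if it contains exactly one
element of each part of `Q`. -/
def IsTransversal {n : ℕ} (A : Finset (Fin n))
    (Q : Finpartition (Finset.univ : Finset (Fin n))) : Prop :=
  ∀ p ∈ Q.parts, (A ∩ p).card = 1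

/-- A league of rank `k` on `{1,…,n}`: a pair `(P, T)` where `P` is a set of partitions
of `{1,…,n}` into `k` parts and `T` is a set of `k`-element subsets of `{1,…,n}`, such
that no member of `T` is a transversal of any member of `P`. -/
def IsLeague (n k : ℕ) (P : Set (Finpartition (Finset.univ : Finset (Fin n))))
    (T : Set (Finset (Fin n))) : Prop :=
  (∀ Q ∈ P, Q.parts.card = k) ∧ (∀ A ∈ T, A.card = k) ∧
    ∀ Q ∈ P, ∀ A ∈ T, ¬ IsTransversal A Q

/-- `F(n,k)`: the largest content `|P|·|T|` of a league `(P, T)` of rank `k` on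
`{1,…,n}`. -/
noncomputable def leagueF (n k : ℕ) : ℕ :=
  sSup {m : ℕ | ∃ P T, IsLeague n k P T ∧ m = P.ncard * T.ncard}



section Aux

open Finset

variable {n : ℕ}

/-- rank of a map -/
def rnk (f : Fin n → Fin n) : ℕ := (Finset.univ.image f).card

noncomputable def kerP (f : Fin n → Fin n) : Finpartition (Finset.univ : Finset (Fin n)) :=
  letI : DecidableRel (Setoid.ker f).r := fun a b => decidable_of_iff (f a = f b) Iff.rfl
  Finpartition.ofSetoid (Setoid.ker f)

lemma mem_part_kerP (f : Fin n → Fin n) (a b : Fin n) :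
    b ∈ (kerP f).part a ↔ f a = f b := by
  unfold kerP
  letI : DecidableRel (Setoid.ker f).r := fun a b => decidable_of_iff (f a = f b) Iff.rfl
  exact Finpartition.mem_part_ofSetoid_iff_rel

lemma part_kerP_eq_iff (f : Fin n → Fin n) (a b : Fin n) :
    (kerP f).part a = (kerP f).part b ↔ f a = f b := by
  constructor
  · intro h
    exact (mem_part_kerP f a b).mp (by rw [h]; exact (kerP f).mem_part (mem_univ b))
  · intro h
    exact ((kerP f).part_eq_of_mem ((kerP f).part_mem.mpr (mem_univ a))
      ((mem_part_kerP f a b).mpr h)).symm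

lemma parts_eq_image_part (Q : Finpartition (Finset.univ : Finset (Fin n))) :
    Q.parts = Finset.univ.image Q.part := by
  ext p
  simp only [mem_image, mem_univ, true_and]
  constructor
  · intro hp
    obtain ⟨x, hx⟩ := Q.nonempty_of_mem_parts hp
    exact ⟨x, Q.part_eq_of_mem hp hx⟩
  · rintro ⟨x, rfl⟩
    exact Q.part_mem.mpr (mem_univ x)

/-- two images have same card when the two maps induce the same kernel on `s` -/
lemma card_image_eq_of_ker {α β γ : Type*} [DecidableEq β] [DecidableEq γ] (s : Finset α)
    (g : α → β) (h : α → γ) (H : ∀ a ∈ s, ∀ b ∈ s, (g a = g b ↔ h a = h b)) :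
    (s.image g).card = (s.image h).card := by
  apply Finset.card_bij (i := fun b hb => h (Finset.mem_image.mp hb).choose)
  · intro b hb
    have := (Finset.mem_image.mp hb).choose_spec
    exact Finset.mem_image.mpr ⟨_, this.1, rfl⟩
  · intro b hb b' hb' he
    have h1 := (Finset.mem_image.mp hb).choose_spec
    have h2 := (Finset.mem_image.mp hb').choose_spec
    rw [← h1.2, ← h2.2]
    exact (H _ h1.1 _ h2.1).mpr he
  · intro c hc
    obtain ⟨a, ha, rfl⟩ := Finset.mem_image.mp hc
    refine ⟨g a, Finset.mem_image.mpr ⟨a, ha, rfl⟩, ?_⟩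
    have h1 := (Finset.mem_image.mp (Finset.mem_image.mpr ⟨a, ha, rfl⟩ : g a ∈ s.image g)).choose_spec
    exact (H _ h1.1 _ ha).mp h1.2

lemma rnk_eq_card_parts (f : Fin n → Fin n) : (kerP f).parts.card = rnk f := by
  rw [parts_eq_image_part, rnk]
  exact card_image_eq_of_ker _ _ _ (fun a _ b _ => part_kerP_eq_iff f a b)

lemma card_inter_sum (Q : Finpartition (Finset.univ : Finset (Fin n))) (A : Finset (Fin n)) :
    ∑ p ∈ Q.parts, (A ∩ p).card = A.card := by
  have hA : A = Q.parts.biUnion (fun p => A ∩ p) := by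
    ext a
    simp only [mem_biUnion, mem_inter]
    constructor
    · intro ha
      obtain ⟨p, hp, hap⟩ := Q.exists_mem (mem_univ a)
      exact ⟨p, hp, ha, hap⟩
    · rintro ⟨p, _, ha, _⟩; exact ha
  rw [← Finset.card_biUnion, ← hA]
  intro p hp q hq hpq
  exact Finset.disjoint_of_subset_left inter_subset_right
    (Finset.disjoint_of_subset_right inter_subset_right
      (Q.supIndep.pairwiseDisjoint hp hq hpq))

/-- If `A` (with `|A| = #parts`) is not a transversal of `Q`, some part misses `A`. -/
lemma exists_part_disjoint (Q : Finpartition (Finset.univ : Finset (Fin n)))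
    (A : Finset (Fin n)) (hcard : A.card = Q.parts.card) (hnt : ¬ IsTransversal A Q) :
    ∃ p ∈ Q.parts, A ∩ p = ∅ := by
  by_contra h
  push_neg at h
  apply hnt
  intro p hp
  by_contra hone
  have h1 : ∀ q ∈ Q.parts, 1 ≤ (A ∩ q).card := by
    intro q hq
    have := h q hq
    exact Nat.one_le_iff_ne_zero.mpr (fun hz => this.ne_empty (Finset.card_eq_zero.mp hz))
  have hlt : 1 < (A ∩ p).card := lt_of_le_of_ne (h1 p hp) (Ne.symm hone)
  have := Finset.sum_lt_sum h1 ⟨p, hp, hlt⟩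
  simp only [Finset.sum_const, smul_eq_mul, mul_one] at this
  rw [card_inter_sum, hcard] at this
  exact lt_irrefl _ this

/-- Key lemma: products of league maps drop rank. -/
lemma rnk_comp_lt (f g : Fin n → Fin n) (k : ℕ)
    (hk : (kerP f).parts.card = k) (hA : (Finset.univ.image g).card = k)
    (hnt : ¬ IsTransversal (Finset.univ.image g) (kerP f)) :
    rnk (fun x => f (g x)) ≤ k - 1 := by
  set Q := kerP f with hQ
  set A := Finset.univ.image g with hAdef
  have himg : Finset.univ.image (fun x => f (g x)) = A.image f := by
    rw [hAdef, Finset.image_image]; rfl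
  rw [rnk, himg]
  have hcard : (A.image f).card = (A.image Q.part).card :=
    card_image_eq_of_ker _ _ _ (fun a _ b _ => (part_kerP_eq_iff f a b).symm)
  obtain ⟨p, hp, hdisj⟩ := exists_part_disjoint Q A (by rw [hA, hk]) hnt
  have hsub : A.image Q.part ⊆ Q.parts.erase p := by
    intro q hq
    obtain ⟨a, ha, rfl⟩ := Finset.mem_image.mp hq
    refine Finset.mem_erase.mpr ⟨?_, Q.part_mem.mpr (mem_univ a)⟩
    intro hqp
    have : a ∈ A ∩ p := Finset.mem_inter.mpr ⟨ha, hqp ▸ Q.mem_part (mem_univ a)⟩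
    simp [hdisj] at this
  calc (A.image f).card = (A.image Q.part).card := hcard
    _ ≤ (Q.parts.erase p).card := Finset.card_le_card hsub
    _ = k - 1 := by rw [Finset.card_erase_of_mem hp, hk]

section Builder

variable (k : ℕ) (Q : Finpartition (Finset.univ : Finset (Fin n))) (hQ : Q.parts.card = k)
  (A : Finset (Fin n)) (hA : A.card = k)

/-- index of the part containing `x` -/
noncomputable def pidx (x : Fin n) : Fin k :=
  Fin.cast hQ (Q.parts.equivFin ⟨Q.part x, Q.part_mem.mpr (mem_univ x)⟩)

/-- the element of `A` with index `i` -/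
noncomputable def aelem (i : Fin k) : Fin n :=
  ↑(A.equivFin.symm (Fin.cast hA.symm i))

lemma aelem_mem (i : Fin k) : aelem k A hA i ∈ A := (A.equivFin.symm _).2

lemma aelem_inj : Function.Injective (aelem k A hA) := by
  intro i j h
  have h2 := A.equivFin.symm.injective (Subtype.ext h)
  have := congrArg (Fin.cast hA) h2
  simpa [Fin.ext_iff] using this

lemma aelem_surj : ∀ a ∈ A, ∃ i, aelem k A hA i = a := by
  intro a ha
  refine ⟨Fin.cast hA (A.equivFin ⟨a, ha⟩), ?_⟩
  have : Fin.cast hA.symm (Fin.cast hA (A.equivFin ⟨a, ha⟩)) = A.equivFin ⟨a, ha⟩ := by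
    simp [Fin.ext_iff]
  rw [aelem, this, Equiv.symm_apply_apply]

lemma pidx_eq_iff (x y : Fin n) :
    pidx k Q hQ x = pidx k Q hQ y ↔ Q.part x = Q.part y := by
  unfold pidx
  rw [Fin.ext_iff]
  simp only [Fin.coe_cast]
  rw [← Fin.ext_iff]
  constructor
  · intro h
    have h2 : (Q.parts.equivFin ⟨Q.part x, Q.part_mem.mpr (mem_univ x)⟩)
        = Q.parts.equivFin ⟨Q.part y, Q.part_mem.mpr (mem_univ y)⟩ := h
    simpa using congrArg Subtype.val (Q.parts.equivFin.injective h2)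
  · intro h
    have h3 : (⟨Q.part x, Q.part_mem.mpr (mem_univ x)⟩ : {q // q ∈ Q.parts})
        = ⟨Q.part y, Q.part_mem.mpr (mem_univ y)⟩ := Subtype.ext h
    rw [h3]

lemma pidx_surj : ∀ j : Fin k, ∃ x, pidx k Q hQ x = j ∧ Q.part x = Q.parts.equivFin.symm (Fin.cast hQ.symm j) := by
  intro j
  set p := Q.parts.equivFin.symm (Fin.cast hQ.symm j) with hp
  obtain ⟨x, hx⟩ := Q.nonempty_of_mem_parts p.2
  have hpart : Q.part x = p := Q.part_eq_of_mem p.2 hx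
  refine ⟨x, ?_, hpart⟩
  unfold pidx
  have : (⟨Q.part x, Q.part_mem.mpr (mem_univ x)⟩ : {q // q ∈ Q.parts}) = p := Subtype.ext hpart
  rw [this, hp, Equiv.apply_symm_apply]
  simp [Fin.ext_iff]

end Builder

section BMap

variable (k : ℕ) (Q : Finpartition (Finset.univ : Finset (Fin n))) (hQ : Q.parts.card = k)
  (A : Finset (Fin n)) (hA : A.card = k) (σ : Equiv.Perm (Fin k))

noncomputable def bmap : Fin n → Fin n :=
  fun x => aelem k A hA (σ (pidx k Q hQ x))

lemma bmap_eq_iff (x y : Fin n) :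
    bmap k Q hQ A hA σ x = bmap k Q hQ A hA σ y ↔ Q.part x = Q.part y := by
  unfold bmap
  rw [← pidx_eq_iff k Q hQ]
  exact ⟨fun h => σ.injective (aelem_inj k A hA h), fun h => by rw [h]⟩

lemma bmap_image : Finset.univ.image (bmap k Q hQ A hA σ) = A := by
  apply Finset.Subset.antisymm
  · intro a ha
    obtain ⟨x, _, rfl⟩ := Finset.mem_image.mp ha
    exact aelem_mem k A hA _
  · intro a ha
    obtain ⟨i, hi⟩ := aelem_surj k A hA a ha
    obtain ⟨x, hx, -⟩ := pidx_surj k Q hQ (σ.symm i)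
    refine Finset.mem_image.mpr ⟨x, mem_univ x, ?_⟩
    rw [bmap, hx, Equiv.apply_symm_apply, hi]

lemma bmap_kerP : kerP (bmap k Q hQ A hA σ) = Q := by
  have hpart : ∀ x, (kerP (bmap k Q hQ A hA σ)).part x = Q.part x := by
    intro x
    ext y
    rw [mem_part_kerP, bmap_eq_iff]
    constructor
    · intro h
      rw [h]
      exact Q.mem_part (mem_univ y)
    · intro h
      exact (Q.part_eq_of_mem (Q.part_mem.mpr (mem_univ x)) h).symm
  ext p
  rw [parts_eq_image_part (kerP (bmap k Q hQ A hA σ)), parts_eq_image_part Q]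
  simp only [mem_image, hpart]

lemma bmap_rnk : rnk (bmap k Q hQ A hA σ) = k := by
  rw [rnk, bmap_image, hA]

end BMap

lemma bmap_inj (k : ℕ) (Q Q' : Finpartition (Finset.univ : Finset (Fin n)))
    (hQ : Q.parts.card = k) (hQ' : Q'.parts.card = k)
    (A A' : Finset (Fin n)) (hA : A.card = k) (hA' : A'.card = k)
    (σ σ' : Equiv.Perm (Fin k))
    (h : bmap k Q hQ A hA σ = bmap k Q' hQ' A' hA' σ') :
    Q = Q' ∧ A = A' ∧ σ = σ' := by
  have hAA : A = A' := by rw [← bmap_image k Q hQ A hA σ, h, bmap_image]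
  have hQQ : Q = Q' := by
    rw [← bmap_kerP k Q hQ A hA σ, h, bmap_kerP]
  subst hAA hQQ
  refine ⟨rfl, rfl, ?_⟩
  ext j
  obtain ⟨x, hx, -⟩ := pidx_surj k Q hQ j
  have h1 : aelem k A hA (σ j) = aelem k A hA (σ' j) := by
    have := congrFun h x
    rwa [bmap, bmap, hx] at this
  exact congrArg Fin.val (aelem_inj k A hA h1)

instance finpartition_finite : Finite (Finpartition (Finset.univ : Finset (Fin n))) :=
  Finite.of_injective (fun P => P.parts) (fun P Q h => Finpartition.ext (by exact h))

lemma leagueF_spec (k : ℕ) : ∃ P T, IsLeague n k P T ∧ leagueF n k = P.ncard * T.ncard := by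
  have hne : ({m : ℕ | ∃ P T, IsLeague n k P T ∧ m = P.ncard * T.ncard}).Nonempty := by
    refine ⟨0, ∅, ∅, ⟨?_, ?_, ?_⟩, by simp⟩ <;> simp
  have hbdd : BddAbove {m : ℕ | ∃ P T, IsLeague n k P T ∧ m = P.ncard * T.ncard} := by
    refine ⟨(Nat.card (Finpartition (Finset.univ : Finset (Fin n)))) * Nat.card (Finset (Fin n)), ?_⟩
    rintro m ⟨P, T, _, rfl⟩
    have h1 : P.ncard ≤ Nat.card (Finpartition (Finset.univ : Finset (Fin n))) := by
      rw [← Set.ncard_univ]; exact Set.ncard_le_ncard (Set.subset_univ _) (Set.toFinite _)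
    have h2 : T.ncard ≤ Nat.card (Finset (Fin n)) := by
      rw [← Set.ncard_univ]; exact Set.ncard_le_ncard (Set.subset_univ _) (Set.toFinite _)
    exact Nat.mul_le_mul h1 h2
  exact Nat.sSup_mem hne hbdd

lemma layer_exists (k : ℕ) (hk1 : 1 ≤ k) (_hkn : k ≤ n) :
    ∃ G : Finset (Fin n → Fin n), G.card = leagueF n k * k.factorial ∧
      (∀ f ∈ G, rnk f = k) ∧
      (∀ f ∈ G, ∀ g ∈ G, rnk (fun x => f (g x)) ≤ k - 1) := by
  obtain ⟨P, T, hL, hF⟩ := leagueF_spec (n := n) k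
  set S : Set (Fin n → Fin n) := {f | kerP f ∈ P ∧ Finset.univ.image f ∈ T} with hS
  -- the injection
  have hinj : ∃ ψ : (↥P × ↥T × Equiv.Perm (Fin k)) → ↥S, Function.Injective ψ := by
    refine ⟨fun x => ⟨bmap k x.1.1 (hL.1 _ x.1.2) x.2.1.1 (hL.2.1 _ x.2.1.2) x.2.2, ?_, ?_⟩, ?_⟩
    · rw [bmap_kerP]; exact x.1.2
    · rw [bmap_image]; exact x.2.1.2
    · rintro ⟨Q, A, σ⟩ ⟨Q', A', σ'⟩ h
      have h' := congrArg Subtype.val h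
      obtain ⟨h1, h2, h3⟩ := bmap_inj k Q.1 Q'.1 (hL.1 _ Q.2) (hL.1 _ Q'.2) A.1 A'.1 (hL.2.1 _ A.2) (hL.2.1 _ A'.2) σ σ' h'
      exact Prod.ext (Subtype.ext h1) (Prod.ext (Subtype.ext h2) h3)
  obtain ⟨ψ, hψ⟩ := hinj
  have hcard : leagueF n k * k.factorial ≤ S.ncard := by
    have h1 : Nat.card (↥P × ↥T × Equiv.Perm (Fin k)) ≤ Nat.card ↥S :=
      Nat.card_le_card_of_injective ψ hψ
    have h2 : Nat.card (↥P × ↥T × Equiv.Perm (Fin k))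
        = P.ncard * (T.ncard * k.factorial) := by
      rw [Nat.card_prod, Nat.card_prod, Nat.card_coe_set_eq, Nat.card_coe_set_eq,
        Nat.card_eq_fintype_card, Fintype.card_perm, Fintype.card_fin]
    rw [hF, mul_assoc, ← h2, Nat.card_coe_set_eq] at *
    exact h1
  have hcard2 : leagueF n k * k.factorial ≤ (S.toFinite.toFinset).card := by
    rwa [Set.ncard_eq_toFinset_card _ S.toFinite] at hcard
  obtain ⟨G, hGsub, hGcard⟩ := Finset.exists_subset_card_eq hcard2
  have hGS : ∀ f ∈ G, f ∈ S := fun f hf => (Set.Finite.mem_toFinset _).mp (hGsub hf)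
  refine ⟨G, hGcard, ?_, ?_⟩
  · intro f hf
    rw [← rnk_eq_card_parts]
    exact hL.1 _ (hGS f hf).1
  · intro f hf g hg
    exact rnk_comp_lt f g k (hL.1 _ (hGS f hf).1)
      (hL.2.1 _ (hGS g hg).2) (hL.2.2 _ (hGS f hf).1 _ (hGS g hg).2)

section Engine

variable {M : Type*} [Mul M]

/-- extension subsemigroup -/
def extSub (I : Set M) (G S : Finset M)
    (hidl : ∀ a b : M, a ∈ I → a * b ∈ I) (hidr : ∀ a b : M, b ∈ I → a * b ∈ I)
    (hGmul : ∀ f ∈ G, ∀ g ∈ G, f * g ∈ I) (hSG : ↑S ⊆ (G : Set M)) : Subsemigroup M where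
  carrier := I ∪ ↑S
  mul_mem' := by
    rintro a b (ha | ha) hb
    · exact Or.inl (hidl a b ha)
    rcases hb with hb | hb
    · exact Or.inl (hidr a b hb)
    · exact Or.inl (hGmul a (hSG ha) b (hSG hb))

lemma chain_exists (I : ℕ → Set M) (G : ℕ → Finset M) (n : ℕ)
    (hmono : Monotone I)
    (hidl : ∀ t, ∀ a b : M, a ∈ I t → a * b ∈ I t)
    (hidr : ∀ t, ∀ a b : M, b ∈ I t → a * b ∈ I t)
    (hsub : ∀ t, 1 ≤ t → t ≤ n → ∀ f ∈ G t, f ∈ I t ∧ f ∉ I (t - 1))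
    (hmul : ∀ t, 1 ≤ t → t ≤ n → ∀ f ∈ G t, ∀ g ∈ G t, f * g ∈ I (t - 1)) :
    ∀ t, t ≤ n → ∃ c : ℕ → Subsemigroup M,
      (∀ i, i + 1 < ∑ s ∈ Finset.Icc 1 t, (G s).card → c i < c (i + 1)) ∧
      (∀ i, i < ∑ s ∈ Finset.Icc 1 t, (G s).card →
        (c i : Set M).Nonempty ∧ (c i : Set M) ⊆ I t) := by
  classical
  intro t
  induction t with
  | zero => intro _; exact ⟨fun _ => ⊥, by simp, by simp⟩
  | succ t ih =>
    intro htn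
    obtain ⟨c, hc1, hc2⟩ := ih (le_trans (Nat.le_succ t) htn)
    set N := ∑ s ∈ Finset.Icc 1 t, (G s).card with hN
    set m := (G (t + 1)).card with hm
    have hsum : ∑ s ∈ Finset.Icc 1 (t + 1), (G s).card = N + m := by
      rw [Finset.sum_Icc_succ_top (by omega)]
    -- list enumeration of G (t+1)
    set l := (G (t + 1)).toList with hl
    have hlen : l.length = m := Finset.length_toList _
    have hnodup : l.Nodup := Finset.nodup_toList _
    have hmem : ∀ x ∈ l, x ∈ G (t + 1) := fun x hx => Finset.mem_toList.mp hx
    -- prefixes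
    set pre : ℕ → Finset M := fun j => (l.take j).toFinset with hpre
    have hpre_sub : ∀ j, ↑(pre j) ⊆ (G (t + 1) : Set M) := by
      intro j x hx
      exact hmem x (List.take_subset j l (List.mem_toFinset.mp hx))
    have hpre_mono : ∀ j j', j ≤ j' → pre j ⊆ pre j' := by
      intro j j' hj x hx
      rw [hpre, List.mem_toFinset] at hx ⊢
      have : l.take j = (l.take j').take j := by rw [List.take_take, Nat.min_eq_left hj]
      rw [this] at hx
      exact List.take_subset _ _ hx
    have hgrow : ∀ j, j < m → ∃ x, x ∈ pre (j + 1) ∧ x ∉ pre j ∧ x ∈ G (t + 1) := by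
      intro j hj
      have hjl : j < l.length := by omega
      refine ⟨l[j], ?_, ?_, hmem _ (List.getElem_mem hjl)⟩
      · rw [hpre, List.mem_toFinset]
        have : l.take (j + 1) = l.take j ++ [l[j]] := by
          rw [List.take_succ]
          simp [List.getElem?_eq_getElem hjl]
        rw [this]
        exact List.mem_append_right _ (List.mem_singleton_self _)
      · rw [hpre, List.mem_toFinset]
        have hnd : (l.take (j + 1)).Nodup := (List.take_sublist _ _).nodup hnodup
        have heq : l.take (j + 1) = l.take j ++ [l[j]] := by
          rw [List.take_succ]
          simp [List.getElem?_eq_getElem hjl]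
        rw [heq] at hnd
        have := List.disjoint_of_nodup_append hnd
        intro hmem'
        exact this hmem' (by simp)
    -- the extension subsemigroups
    have hGImul : ∀ f ∈ G (t + 1), ∀ g ∈ G (t + 1), f * g ∈ I t := by
      intro f hf g hg
      simpa using hmul (t + 1) (by omega) htn f hf g hg
    set D : ℕ → Subsemigroup M := fun j =>
      extSub (I t) (G (t + 1)) (pre j) (hidl t) (hidr t) hGImul (hpre_sub j) with hD
    have hDcar : ∀ j, (D j : Set M) = I t ∪ ↑(pre j) := fun j => rfl
    have hGnotI : ∀ x ∈ G (t + 1), x ∉ I t := by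
      intro x hx
      have := (hsub (t + 1) (by omega) htn x hx).2
      simpa using this
    have hGI : ∀ x ∈ G (t + 1), x ∈ I (t + 1) := fun x hx => (hsub (t + 1) (by omega) htn x hx).1
    refine ⟨fun i => if i < N then c i else D (i - N + 1), ?_, ?_⟩
    · intro i hi
      rw [hsum] at hi
      by_cases h1 : i + 1 < N
      · have h0 : i < N := by omega
        simp only [if_pos h1, if_pos h0]
        exact hc1 i h1
      · by_cases h0 : i < N
        · -- i + 1 = N, boundary
          have hiN : i + 1 = N := by omega
          have hm1 : 0 < m := by omega
          simp only [if_pos h0, if_neg h1]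
          rw [SetLike.lt_iff_le_and_exists]
          obtain ⟨x, hx1, _, hxG⟩ := hgrow 0 hm1
          have hsubI : (c i : Set M) ⊆ I t := (hc2 i h0).2
          constructor
          · intro y hy
            exact Or.inl (hsubI hy)
          · refine ⟨x, ?_, fun hx => hGnotI x hxG (hsubI hx)⟩
            show x ∈ (D (i + 1 - N + 1) : Set M)
            rw [hDcar]
            right
            have : i + 1 - N + 1 = 1 := by omega
            rw [this]
            exact_mod_cast hx1
        · -- both in D range
          have hjN : N ≤ i := by omega
          set j := i - N with hj
          have hj1 : i + 1 - N + 1 = j + 2 := by omega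
          have hjm : j + 1 < m := by omega
          simp only [if_neg h0, if_neg h1, hj1]
          rw [SetLike.lt_iff_le_and_exists]
          obtain ⟨x, hx1, hx2, hxG⟩ := hgrow (j + 1) hjm
          constructor
          · show (D (j + 1) : Set M) ⊆ (D (j + 2) : Set M)
            rw [hDcar, hDcar]
            exact Set.union_subset_union_right _ (by exact_mod_cast hpre_mono _ _ (by omega))
          · refine ⟨x, ?_, ?_⟩
            · show x ∈ (D (j + 2) : Set M)
              rw [hDcar]; exact Or.inr (by exact_mod_cast hx1)
            · show x ∉ (D (j + 1) : Set M)
              rw [hDcar]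
              rintro (hx | hx)
              · exact hGnotI x hxG hx
              · exact hx2 (by exact_mod_cast hx)
    · intro i hi
      rw [hsum] at hi
      by_cases h0 : i < N
      · simp only [if_pos h0]
        obtain ⟨hne, hsb⟩ := hc2 i h0
        exact ⟨hne, hsb.trans (hmono (Nat.le_succ t))⟩
      · have hjm : i - N < m := by omega
        simp only [if_neg h0]
        obtain ⟨x, hx1, _, hxG⟩ := hgrow (i - N) hjm
        constructor
        · exact ⟨x, by rw [hDcar]; exact Or.inr (by exact_mod_cast hx1)⟩
        · rw [hDcar]
          rintro y (hy | hy)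
          · exact hmono (Nat.le_succ t) hy
          · exact hGI y (hpre_sub _ (by exact_mod_cast hy))

end Engine

lemma lt_of_consec {γ : Type*} [Preorder γ] (c : ℕ → γ) (N : ℕ)
    (h : ∀ i, i + 1 < N → c i < c (i + 1)) :
    ∀ i j, i < j → j < N → c i < c j := by
  intro i j hij hj
  induction j with
  | zero => omega
  | succ j ihj =>
    rcases Nat.lt_or_ge i j with h' | h'
    · exact lt_trans (ihj h' (by omega)) (h j hj)
    · have : i = j := by omega
      subst this
      exact h i hj

lemma rnk_mul_le_left (a b : Fin n → Fin n) : rnk (fun x => a (b x)) ≤ rnk a := by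
  unfold rnk
  apply Finset.card_le_card
  intro y hy
  obtain ⟨x, _, rfl⟩ := Finset.mem_image.mp hy
  exact Finset.mem_image.mpr ⟨b x, mem_univ _, rfl⟩

lemma rnk_mul_le_right (a b : Fin n → Fin n) : rnk (fun x => a (b x)) ≤ rnk b := by
  unfold rnk
  have : Finset.univ.image (fun x => a (b x)) = (Finset.univ.image b).image a := by
    rw [Finset.image_image]; rfl
  rw [this]
  exact Finset.card_image_le


end Aux

/-- For every positive integer `n`, the length of the full transformation semigroup
`T_n` satisfies `l(T_n) ≥ (∑_{k=1}^n F(n,k)·k!) − 1`. -/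
theorem semigroupLength_ge_sum_leagueF (n : ℕ) (hn : 0 < n) :
    (∑ k ∈ Finset.Icc 1 n, leagueF n k * k.factorial) - 1 ≤
      semigroupLength (Function.End (Fin n)) := by
  set M := Function.End (Fin n) with hM
  set Nsum := ∑ k ∈ Finset.Icc 1 n, leagueF n k * k.factorial with hNsum
  rcases Nat.eq_zero_or_pos Nsum with h0 | hpos
  · rw [h0]; exact Nat.zero_le _
  -- choose layers
  have H : ∀ k : ℕ, ∃ Gk : Finset (Fin n → Fin n), 1 ≤ k → k ≤ n →
      (Gk.card = leagueF n k * k.factorial ∧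
        (∀ f ∈ Gk, rnk f = k) ∧
        (∀ f ∈ Gk, ∀ g ∈ Gk, rnk (fun x => f (g x)) ≤ k - 1)) := by
    intro k
    by_cases hk : 1 ≤ k ∧ k ≤ n
    · obtain ⟨G, h1, h2, h3⟩ := layer_exists k hk.1 hk.2
      exact ⟨G, fun _ _ => ⟨h1, h2, h3⟩⟩
    · exact ⟨∅, fun c1 c2 => absurd ⟨c1, c2⟩ hk⟩
  choose G hG using H
  set I : ℕ → Set M := fun t => {f : Fin n → Fin n | rnk f ≤ t} with hI
  have hmuldef : ∀ a b : M, (a * b : M) = (fun x => a (b x) : Fin n → Fin n) := fun _ _ => rfl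
  have hmono : Monotone I := fun s t hst f hf => le_trans hf hst
  have hidl : ∀ t, ∀ a b : M, a ∈ I t → a * b ∈ I t := by
    intro t a b ha
    show rnk (a * b : M) ≤ t
    rw [hmuldef]
    exact le_trans (rnk_mul_le_left a b) ha
  have hidr : ∀ t, ∀ a b : M, b ∈ I t → a * b ∈ I t := by
    intro t a b hb
    show rnk (a * b : M) ≤ t
    rw [hmuldef]
    exact le_trans (rnk_mul_le_right a b) hb
  have hsub : ∀ t, 1 ≤ t → t ≤ n → ∀ f : M, f ∈ G t → f ∈ I t ∧ f ∉ I (t - 1) := by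
    intro t h1 h2 f hf
    have := (hG t h1 h2).2.1 f hf
    constructor
    · show rnk f ≤ t; omega
    · show ¬ rnk f ≤ t - 1; omega
  have hmul : ∀ t, 1 ≤ t → t ≤ n → ∀ f : M, f ∈ G t → ∀ g : M, g ∈ G t → f * g ∈ I (t - 1) := by
    intro t h1 h2 f hf g hg
    show rnk (f * g : M) ≤ t - 1
    rw [hmuldef]
    exact (hG t h1 h2).2.2 f hf g hg
  obtain ⟨c, hc1, hc2⟩ := chain_exists I G n hmono hidl hidr hsub hmul n le_rfl
  have hsumeq : ∑ s ∈ Finset.Icc 1 n, (G s).card = Nsum := by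
    rw [hNsum]
    apply Finset.sum_congr rfl
    intro s hs
    rw [Finset.mem_Icc] at hs
    exact (hG s hs.1 hs.2).1
  rw [show (∑ s ∈ Finset.Icc 1 n, @Finset.card M (G s)) = Nsum from hsumeq] at hc1 hc2
  -- build the Fin-indexed chain
  have hNform : Nsum - 1 + 1 = Nsum := by omega
  set d : Fin (Nsum - 1 + 1) → Subsemigroup M := fun i => c i.1 with hd
  have hdmono : StrictMono d := by
    intro i j hij
    exact lt_of_consec c Nsum hc1 i.1 j.1 hij (by omega)
  have hdne : ∀ i, ((d i : Set M)).Nonempty := by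
    intro i
    exact (hc2 i.1 (by omega)).1
  haveI : Finite M := inferInstanceAs (Finite (Fin n → Fin n))
  haveI : Finite (Subsemigroup M) :=
    Finite.of_injective (fun S => (S : Set M)) SetLike.coe_injective
  have hmem : Nsum - 1 ∈ {k : ℕ | ∃ c : Fin (k + 1) → Subsemigroup M,
      StrictMono c ∧ ∀ i, ((c i : Set M)).Nonempty} := ⟨d, hdmono, hdne⟩
  have hbdd : BddAbove {k : ℕ | ∃ c : Fin (k + 1) → Subsemigroup M,
      StrictMono c ∧ ∀ i, ((c i : Set M)).Nonempty} := by
    refine ⟨Nat.card (Subsemigroup M), ?_⟩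
    rintro k ⟨e, he, -⟩
    have : Nat.card (Fin (k + 1)) ≤ Nat.card (Subsemigroup M) :=
      Nat.card_le_card_of_injective e he.injective
    rw [Nat.card_eq_fintype_card, Fintype.card_fin] at this
    omega
  exact le_csSup hbdd hmem
end

section
/- For all integers n and k with 1 ≤ k ≤ n, F(n,k) ≥ C(n−1, k) · S(n−1, k−1), where C denotes the binomial coefficient and S(·,·) the Stirling numbers of the second kind. -/
/-- The Stirling numbers of the second kind: `stirling2 m j` is the number of partitions
of an `m`-element set into `j` non-empty parts. -/
def stirling2 : ℕ → ℕ → ℕ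
  | 0, 0 => 1
  | 0, _ + 1 => 0
  | _ + 1, 0 => 0
  | m + 1, j + 1 => (j + 1) * stirling2 m (j + 1) + stirling2 m j



open Finset

/-- canonical (reversed) restricted growth strings -/
def Canon : List ℕ → Prop
  | [] => True
  | c :: t => (c ∈ t.toFinset ∨ c = t.toFinset.card) ∧ Canon t

def stirling2' : ℕ → ℕ → ℕ
  | 0, 0 => 1
  | 0, _ + 1 => 0
  | _ + 1, 0 => 0
  | m + 1, j + 1 => (j + 1) * stirling2' m (j + 1) + stirling2' m j

def rgsSet : ℕ → ℕ → Finset (List ℕ)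
  | 0, 0 => {[]}
  | 0, _ + 1 => ∅
  | _ + 1, 0 => ∅
  | m + 1, j + 1 =>
      ((Finset.range (j + 1) ×ˢ rgsSet m (j + 1)).image fun p => p.1 :: p.2) ∪
        ((rgsSet m j).image fun l => j :: l)

lemma rgsSet_spec (m : ℕ) : ∀ j l, l ∈ rgsSet m j →
    l.length = m ∧ l.toFinset = Finset.range j ∧ Canon l := by
  induction m with
  | zero =>
    intro j l hl
    cases j with
    | zero =>
      simp only [rgsSet, mem_singleton] at hl
      subst hl; simp [Canon]
    | succ j => simp [rgsSet] at hl
  | succ m ih =>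
    intro j l hl
    cases j with
    | zero => simp [rgsSet] at hl
    | succ j =>
      simp only [rgsSet, mem_union, mem_image, mem_product, Prod.exists] at hl
      rcases hl with ⟨c, t, ⟨hc, ht⟩, rfl⟩ | ⟨t, ht, rfl⟩
      · obtain ⟨hlen, htf, hcan⟩ := ih _ _ ht
        refine ⟨by simp [hlen], ?_, ?_, hcan⟩
        · rw [List.toFinset_cons, htf, Finset.insert_eq_self.2 hc]
        · exact Or.inl (by rw [htf]; exact hc)
      · obtain ⟨hlen, htf, hcan⟩ := ih _ _ ht
        refine ⟨by simp [hlen], ?_, ?_, hcan⟩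
        · rw [List.toFinset_cons, htf, Finset.range_add_one]
        · exact Or.inr (by rw [htf, Finset.card_range])

lemma rgsSet_card (m : ℕ) : ∀ j, (rgsSet m j).card = stirling2' m j := by
  induction m with
  | zero => intro j; cases j <;> simp [rgsSet, stirling2']
  | succ m ih =>
    intro j
    cases j with
    | zero => simp [rgsSet, stirling2']
    | succ j =>
      rw [rgsSet, stirling2']
      have hinj1 : Set.InjOn (fun p : ℕ × List ℕ => p.1 :: p.2)
          ↑(Finset.range (j + 1) ×ˢ rgsSet m (j + 1)) := by
        intro p _ q _ h
        cases p; cases q; simpa [Prod.ext_iff] using h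
      have hinj2 : Set.InjOn (fun l : List ℕ => j :: l) ↑(rgsSet m j) := by
        intro p _ q _ h; simpa using h
      have hdisj : Disjoint
          ((Finset.range (j + 1) ×ˢ rgsSet m (j + 1)).image fun p => p.1 :: p.2)
          ((rgsSet m j).image fun l => j :: l) := by
        rw [Finset.disjoint_left]
        rintro x hx hx'
        simp only [mem_image, mem_product, Prod.exists] at hx hx'
        obtain ⟨c, t, ⟨hc, ht⟩, rfl⟩ := hx
        obtain ⟨t', ht', heq⟩ := hx'
        injection heq with h1 h2
        subst h1; subst h2
        have h1 := (rgsSet_spec m _ _ ht).2.1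
        have h2 := (rgsSet_spec m _ _ ht').2.1
        rw [h2] at h1
        have : j ∈ Finset.range j := by rw [h1]; exact Finset.self_mem_range_succ j
        exact absurd this (by simp)
      rw [Finset.card_union_of_disjoint hdisj, Finset.card_image_of_injOn hinj1,
        Finset.card_image_of_injOn hinj2, Finset.card_product, Finset.card_range, ih, ih]

lemma canon_inj : ∀ l l' : List ℕ, Canon l → Canon l' → l.length = l'.length →
    (∀ i i', i < l.length → i' < l.length →
      (l.getD i 0 = l.getD i' 0 ↔ l'.getD i 0 = l'.getD i' 0)) → l = l' := by
  intro l
  induction l with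
  | nil => intro l' _ _ hlen _; exact (List.length_eq_zero_iff.1 hlen.symm).symm
  | cons c t IH =>
    intro l' hc hc' hlen hker
    cases l' with
    | nil => simp at hlen
    | cons d t' =>
      simp only [Canon] at hc hc'
      simp only [List.length_cons, Nat.succ.injEq] at hlen
      have htt : t = t' := by
        refine IH t' hc.2 hc'.2 hlen ?_
        intro i i' hi hi'
        have := hker (i + 1) (i' + 1) (by simpa using Nat.succ_lt_succ hi)
          (by simpa using Nat.succ_lt_succ hi')
        simpa [List.getD_cons_succ] using this
      subst htt
      suffices hcd : c = d by rw [hcd]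
      by_cases hmem : c ∈ t.toFinset
      · rw [List.mem_toFinset, List.mem_iff_getElem] at hmem
        obtain ⟨i, hi, hgi⟩ := hmem
        have := hker 0 (i + 1) (by simp) (by simpa using Nat.succ_lt_succ hi)
        simp only [List.getD_cons_zero, List.getD_cons_succ] at this
        rw [List.getD_eq_getElem t 0 hi] at this
        exact ((this.1 hgi.symm).trans hgi).symm
      · have hc1 : c = t.toFinset.card := hc.1.resolve_left hmem
        have hdnot : d ∉ t.toFinset := by
          intro hd
          rw [List.mem_toFinset, List.mem_iff_getElem] at hd
          obtain ⟨i, hi, hgi⟩ := hd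
          have := hker 0 (i + 1) (by simp) (by simpa using Nat.succ_lt_succ hi)
          simp only [List.getD_cons_zero, List.getD_cons_succ] at this
          rw [List.getD_eq_getElem t 0 hi] at this
          exact hmem (by
            rw [List.mem_toFinset]
            have hcv : c = t[i] := this.2 hgi.symm
            rw [hcv]; exact List.getElem_mem hi)
        have hd1 : d = t.toFinset.card := hc'.1.resolve_left hdnot
        rw [hc1, hd1]

section Fiber

variable {α : Type*} [Fintype α] [DecidableEq α]

/-- the partition of `univ` into fibers of `g` -/
def fiberPart (g : α → ℕ) : Finpartition (univ : Finset α) where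
  parts := (univ.image g).image fun c => univ.filter fun a => g a = c
  supIndep := by
    rw [Finset.supIndep_iff_pairwiseDisjoint]
    rintro x hx y hy hxy
    simp only [Finset.coe_image, Set.mem_image, Finset.mem_coe] at hx hy
    obtain ⟨c, _, rfl⟩ := hx
    obtain ⟨c', _, rfl⟩ := hy
    simp only [Function.onFun, id_eq]
    rw [Finset.disjoint_left]
    intro a ha ha'
    simp only [id, Finset.mem_filter] at ha ha'
    exact hxy (by rw [← ha.2, ha'.2])
  sup_parts := by
    ext a
    simp only [Finset.mem_sup, mem_image, Finset.mem_univ, iff_true]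
    refine ⟨univ.filter fun b => g b = g a, ⟨g a, ?_, rfl⟩, by simp⟩
    exact ⟨a, trivial, rfl⟩
  bot_notMem := by
    simp only [Finset.bot_eq_empty, mem_image, not_exists]
    rintro c ⟨hc, hcontra⟩
    obtain ⟨a, -, rfl⟩ := hc
    have : a ∈ univ.filter fun b => g b = g a := by simp
    rw [hcontra] at this
    exact absurd this (Finset.notMem_empty a)

lemma fiberPart_parts_card (g : α → ℕ) :
    (fiberPart g).parts.card = (univ.image g).card := by
  rw [fiberPart]
  apply Finset.card_image_of_injOn
  intro c hc c' hc' h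
  simp only [Finset.coe_image, Set.mem_image, mem_coe] at hc hc'
  obtain ⟨a, -, rfl⟩ := hc
  have h' : (univ.filter fun b => g b = g a) = univ.filter fun b => g b = c' := h
  have : a ∈ univ.filter fun b => g b = g a := by simp
  rw [h'] at this
  simp only [mem_filter] at this
  exact this.2

lemma fiberPart_ker {g g' : α → ℕ} (h : fiberPart g = fiberPart g') (a b : α) :
    g a = g b ↔ g' a = g' b := by
  have hp : (fiberPart g).parts = (fiberPart g').parts := by rw [h]
  have hmem : (univ.filter fun x => g x = g a) ∈ (fiberPart g').parts := by
    rw [← hp, fiberPart]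
    exact mem_image_of_mem _ (Finset.mem_image_of_mem g (mem_univ a))
  rw [fiberPart] at hmem
  simp only [mem_image] at hmem
  obtain ⟨c', -, heq⟩ := hmem
  have heq' : (univ.filter fun x => g' x = c') = univ.filter fun x => g x = g a := heq
  have ha : g' a = c' := by
    have : a ∈ univ.filter fun x => g x = g a := by simp
    rw [← heq'] at this
    simpa using this
  constructor
  · intro hab
    have : b ∈ univ.filter fun x => g x = g a := by simp [hab]
    rw [← heq'] at this
    simp only [mem_filter] at this
    rw [this.2, ha]
  · intro hab
    have : b ∈ univ.filter fun x => g' x = c' := by simp [hab, ← ha]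
    rw [heq'] at this
    simp only [mem_filter] at this
    rw [this.2]

lemma fiberPart_singleton_mem {g : α → ℕ} {a₀ : α} (h : ∀ b, g b = g a₀ → b = a₀) :
    ({a₀} : Finset α) ∈ (fiberPart g).parts := by
  have : (univ.filter fun b => g b = g a₀) = {a₀} := by
    ext b; simp only [mem_filter, mem_univ, true_and, mem_singleton]
    exact ⟨h b, fun hb => by rw [hb]⟩
  rw [fiberPart]
  simp only [mem_image]
  exact ⟨g a₀, ⟨a₀, mem_univ a₀, rfl⟩, this⟩

end Fiber

section MainConstruction

open Finset

def gOf (m j : ℕ) (l : List ℕ) : Fin (m + 1) → ℕ := fun i => l.getD i.val j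

variable {m j : ℕ} {l : List ℕ}

lemma gOf_last (hlen : l.length = m) : gOf m j l (Fin.last m) = j := by
  simp only [gOf, Fin.val_last]
  exact List.getD_eq_default _ _ (by omega)

lemma gOf_lt (hlen : l.length = m) (htf : l.toFinset = Finset.range j)
    {b : Fin (m + 1)} (hb : b.val < m) : gOf m j l b < j := by
  have hb' : b.val < l.length := by omega
  have : gOf m j l b = l[b.val] := List.getD_eq_getElem l j hb'
  rw [this]
  have : l[b.val] ∈ l.toFinset := List.mem_toFinset.2 (List.getElem_mem hb')
  rw [htf, Finset.mem_range] at this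
  exact this

lemma image_gOf (hlen : l.length = m) (htf : l.toFinset = Finset.range j) :
    univ.image (gOf m j l) = Finset.range (j + 1) := by
  ext c
  simp only [mem_image, Finset.mem_range]
  constructor
  · rintro ⟨i, -, rfl⟩
    rcases Nat.lt_or_ge i.val m with hi | hi
    · exact Nat.lt_succ_of_lt (gOf_lt hlen htf hi)
    · have : i = Fin.last m := Fin.ext (by simp only [Fin.val_last]; omega)
      rw [this, gOf_last hlen]
      omega
  · intro hc
    rcases Nat.lt_or_ge c j with hcj | hcj
    · have : c ∈ l.toFinset := by rw [htf]; exact Finset.mem_range.2 hcj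
      rw [List.mem_toFinset, List.mem_iff_getElem] at this
      obtain ⟨i, hi, hgi⟩ := this
      refine ⟨⟨i, by omega⟩, mem_univ _, ?_⟩
      show l.getD i j = c
      rw [List.getD_eq_getElem l j hi, hgi]
    · have hcj' : c = j := by omega
      exact ⟨Fin.last m, mem_univ _, by rw [gOf_last hlen, hcj']⟩

lemma singleton_gOf (hlen : l.length = m) (htf : l.toFinset = Finset.range j) :
    ∀ b, gOf m j l b = gOf m j l (Fin.last m) → b = Fin.last m := by
  intro b hb
  rcases Nat.lt_or_ge b.val m with hbm | hbm
  · have h1 := gOf_lt hlen htf hbm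
    rw [hb, gOf_last hlen] at h1
    omega
  · exact Fin.ext (by simp only [Fin.val_last]; omega)

lemma fiberPart_gOf_injOn :
    Set.InjOn (fun l => fiberPart (gOf m j l)) ↑(rgsSet m j) := by
  intro l hl l' hl' h
  obtain ⟨hlen, htf, hcan⟩ := rgsSet_spec m j l hl
  obtain ⟨hlen', htf', hcan'⟩ := rgsSet_spec m j l' hl'
  have hker := fiberPart_ker h
  refine canon_inj l l' hcan hcan' (by omega) ?_
  intro i i' hi hi'
  have hi2 : i < m := by omega
  have hi'2 : i' < m := by omega
  have key : ∀ (t : List ℕ), t.length = m → ∀ (a : ℕ) (ha : a < m),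
      t.getD a 0 = gOf m j t ⟨a, Nat.lt_succ_of_lt ha⟩ := by
    intro t ht a ha
    have ha' : a < t.length := by omega
    rw [List.getD_eq_getElem t 0 ha']
    exact (List.getD_eq_getElem t j ha').symm
  rw [key l hlen i hi2, key l hlen i' hi'2, key l' hlen' i hi2, key l' hlen' i' hi'2]
  exact hker ⟨i, Nat.lt_succ_of_lt hi2⟩ ⟨i', Nat.lt_succ_of_lt hi'2⟩

end MainConstruction

lemma stirling2_eq : ∀ a b, stirling2 a b = stirling2' a b := by
  intro a
  induction a with
  | zero => intro b; cases b <;> rfl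
  | succ a ih =>
    intro b
    cases b with
    | zero => rfl
    | succ b => rw [stirling2, stirling2', ih, ih]

instance : Finite (Finpartition (Finset.univ : Finset (Fin n))) :=
  Finite.of_injective Finpartition.parts fun _ _ h => Finpartition.ext h

theorem leagueF_ge' (n k : ℕ) (hk : 1 ≤ k) (hkn : k ≤ n) :
    (n - 1).choose k * stirling2 (n - 1) (k - 1) ≤ leagueF n k := by
  obtain ⟨m, rfl⟩ : ∃ m, n = m + 1 := ⟨n - 1, (Nat.succ_pred_eq_of_pos (hk.trans hkn)).symm⟩
  obtain ⟨j, rfl⟩ : ∃ j, k = j + 1 := ⟨k - 1, (Nat.succ_pred_eq_of_pos hk).symm⟩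
  simp only [Nat.add_sub_cancel, stirling2_eq]
  classical
  set a₀ : Fin (m + 1) := Fin.last m with ha₀
  set Pfin : Finset (Finpartition (Finset.univ : Finset (Fin (m + 1)))) :=
    (rgsSet m j).image fun l => fiberPart (gOf m j l) with hPfin
  set Tfin : Finset (Finset (Fin (m + 1))) :=
    Finset.powersetCard (j + 1) (Finset.univ.erase a₀) with hTfin
  have hPcard : Pfin.card = stirling2' m j := by
    rw [hPfin, Finset.card_image_of_injOn fiberPart_gOf_injOn, rgsSet_card]
  have hTcard : Tfin.card = m.choose (j + 1) := by
    rw [hTfin, Finset.card_powersetCard, Finset.card_erase_of_mem (Finset.mem_univ a₀),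
      Finset.card_univ, Fintype.card_fin, Nat.add_sub_cancel]
  have hleague : IsLeague (m + 1) (j + 1) ↑Pfin ↑Tfin := by
    refine ⟨?_, ?_, ?_⟩
    · intro Q hQ
      rw [Finset.mem_coe, hPfin, Finset.mem_image] at hQ
      obtain ⟨l, hl, rfl⟩ := hQ
      obtain ⟨hlen, htf, -⟩ := rgsSet_spec m j l hl
      rw [fiberPart_parts_card, image_gOf hlen htf, Finset.card_range]
    · intro A hA
      rw [Finset.mem_coe, hTfin, Finset.mem_powersetCard] at hA
      exact hA.2
    · intro Q hQ A hA hcontra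
      rw [Finset.mem_coe, hPfin, Finset.mem_image] at hQ
      obtain ⟨l, hl, rfl⟩ := hQ
      obtain ⟨hlen, htf, -⟩ := rgsSet_spec m j l hl
      rw [Finset.mem_coe, hTfin, Finset.mem_powersetCard] at hA
      have ha₀A : a₀ ∉ A := fun h => (Finset.mem_erase.1 (hA.1 h)).1 rfl
      have hsing : ({a₀} : Finset (Fin (m + 1))) ∈ (fiberPart (gOf m j l)).parts :=
        fiberPart_singleton_mem (singleton_gOf hlen htf)
      have := hcontra _ hsing
      rw [Finset.inter_singleton_of_notMem ha₀A, Finset.card_empty] at this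
      exact absurd this (by omega)
  have hmem : stirling2' m j * m.choose (j + 1) ∈
      {x : ℕ | ∃ P T, IsLeague (m + 1) (j + 1) P T ∧ x = P.ncard * T.ncard} := by
    refine ⟨↑Pfin, ↑Tfin, hleague, ?_⟩
    rw [Set.ncard_coe_finset, Set.ncard_coe_finset, hPcard, hTcard]
  have hbdd : BddAbove {x : ℕ | ∃ P T, IsLeague (m + 1) (j + 1) P T ∧ x = P.ncard * T.ncard} := by
    refine ⟨Nat.card (Finpartition (Finset.univ : Finset (Fin (m + 1)))) *
      Nat.card (Finset (Fin (m + 1))), ?_⟩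
    rintro x ⟨P, T, -, rfl⟩
    have h1 : P.ncard ≤ Nat.card (Finpartition (Finset.univ : Finset (Fin (m + 1)))) := by
      rw [← Set.ncard_univ]
      exact Set.ncard_le_ncard (Set.subset_univ _) Set.finite_univ
    have h2 : T.ncard ≤ Nat.card (Finset (Fin (m + 1))) := by
      rw [← Set.ncard_univ]
      exact Set.ncard_le_ncard (Set.subset_univ _) Set.finite_univ
    exact Nat.mul_le_mul h1 h2
  calc m.choose (j + 1) * stirling2' m j = stirling2' m j * m.choose (j + 1) := Nat.mul_comm _ _
    _ ≤ leagueF (m + 1) (j + 1) := le_csSup hbdd hmem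

/-- For all `1 ≤ k ≤ n`, `F(n,k) ≥ C(n−1, k) · S(n−1, k−1)`, where `C` is the binomial
coefficient and `S` the Stirling number of the second kind. -/
theorem leagueF_ge (n k : ℕ) (hk : 1 ≤ k) (hkn : k ≤ n) :
    (n - 1).choose k * stirling2 (n - 1) (k - 1) ≤ leagueF n k := by
  exact leagueF_ge' n k hk hkn
end
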